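/- arXiv:0806.0271 — 13 statements merged into one kernel-verified Lean document; each statement's English description precedes it below -/
import Mathlib

section
/- Let y, z : ℂ → ℂ be holomorphic. Define the 3×3 matrix-valued functions A(μ,t) = μ·[[0,1,0],[0,0,1],[0,0,0]] + [[−y(t), −z(t), −(4y(t)²+2t)],[0, y(t), z(t)],[1/4, 0, 0]] and U(μ,t) = 2·(μ·[[0,0,−1],[0,0,0],[0,0,0]] + [[0, −y(t), −z(t)],[−1/4, 0, −2y(t)],[0, −1/4, 0]]). Then the zero-curvature equation ∂A/∂t − ∂U/∂μ + A·U − U·A = 0 holds for all (μ,t) ∈ ℂ² if and only if y′(t) = z(t) and z′(t) = 6y(t)² + t for all t ∈ ℂ (i.e. iff y solves the first Painlevé equation y″ = 6y² + t). -/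
open Matrix Complex

noncomputable section

/-- The `λ`-coefficient matrix of the `JKT₁` pair (linear in the spectral parameter `μ`). -/
def A₀ (y z : ℂ → ℂ) (μ t : ℂ) : Matrix (Fin 3) (Fin 3) ℂ :=
  μ • (!![0,1,0; 0,0,1; 0,0,0] : Matrix (Fin 3) (Fin 3) ℂ) +
    !![-y t, -z t, -(4*(y t)^2 + 2*t); 0, y t, z t; 1/4, 0, 0]

/-- The `t`-coefficient matrix of the `JKT₁` pair. -/
def U₀ (y : ℂ → ℂ) (z : ℂ → ℂ) (μ t : ℂ) : Matrix (Fin 3) (Fin 3) ℂ :=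
  (2:ℂ) • (μ • (!![0,0,-1; 0,0,0; 0,0,0] : Matrix (Fin 3) (Fin 3) ℂ) +
    !![0, -y t, -z t; -1/4, 0, -2*y t; 0, -1/4, 0])

set_option maxHeartbeats 1000000 in
/-- The zero-curvature equation for the `JKT₁` pair holds identically in `(μ,t)`
iff `y' = z` and `z' = 6 y² + t`, i.e. iff `y` solves the first Painlevé equation. -/
theorem stmt_0 (y z : ℂ → ℂ) (hy : Differentiable ℂ y) (hz : Differentiable ℂ z) :
    (∀ μ t : ℂ,
      (Matrix.of fun i j => deriv (fun s => A₀ y z μ s i j) t)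
        - (Matrix.of fun i j => deriv (fun m => U₀ y z m t i j) μ)
        + A₀ y z μ t * U₀ y z μ t - U₀ y z μ t * A₀ y z μ t = 0)
    ↔ (∀ t : ℂ, deriv y t = z t ∧ deriv z t = 6 * (y t)^2 + t) := by
  have hA : ∀ μ t : ℂ, (Matrix.of fun i j => deriv (fun s => A₀ y z μ s i j) t) =
      !![-deriv y t, -deriv z t, -(8*(y t)*deriv y t + 2); 0, deriv y t, deriv z t; 0, 0, 0] := by
    intro μ t
    ext i j
    fin_cases i <;> fin_cases j <;>
      simp [A₀, Matrix.vecHead, Matrix.vecTail]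
    have h : HasDerivAt (fun s : ℂ => -(2*s) + -(4 * (y s)^2))
        (-(2*1) + -(4 * ((2:ℕ) * (y t)^(2-1) * deriv y t))) t :=
      (((hasDerivAt_id t).const_mul 2).neg.add ((((hy t).hasDerivAt).pow 2).const_mul 4).neg)
    rw [h.deriv]; push_cast; ring
  have hU : ∀ μ t : ℂ, (Matrix.of fun i j => deriv (fun m => U₀ y z m t i j) μ) =
      !![0, 0, -2; 0, 0, 0; 0, 0, 0] := by
    intro μ t
    ext i j
    fin_cases i <;> fin_cases j <;>
      simp [U₀, Matrix.vecHead, Matrix.vecTail, mul_comm]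
  have hAe : ∀ μ t : ℂ, A₀ y z μ t =
      !![-y t, μ - z t, -(4*(y t)^2 + 2*t); 0, y t, μ + z t; 1/4, 0, 0] := by
    intro μ t
    ext i j
    fin_cases i <;> fin_cases j <;>
      simp [A₀, Matrix.vecHead, Matrix.vecTail] <;> ring
  have hUe : ∀ μ t : ℂ, U₀ y z μ t =
      !![0, -2*y t, -2*μ - 2*z t; -(1/2), 0, -4*y t; 0, -(1/2), 0] := by
    intro μ t
    ext i j
    fin_cases i <;> fin_cases j <;>
      simp [U₀, Matrix.vecHead, Matrix.vecTail] <;> ring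
  have key : ∀ μ t : ℂ,
      (Matrix.of fun i j => deriv (fun s => A₀ y z μ s i j) t)
        - (Matrix.of fun i j => deriv (fun m => U₀ y z m t i j) μ)
        + A₀ y z μ t * U₀ y z μ t - U₀ y z μ t * A₀ y z μ t =
      !![z t - deriv y t, 6*(y t)^2 + t - deriv z t, 8*(y t)*(z t - deriv y t);
         0, deriv y t - z t, deriv z t - (6*(y t)^2 + t); 0, 0, 0] := by
    intro μ t
    rw [hA μ t, hU μ t, hAe μ t, hUe μ t, Matrix.mul_fin_three, Matrix.mul_fin_three]
    ext i j
    fin_cases i <;> fin_cases j <;>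
      simp [Matrix.sub_apply, Matrix.add_apply, Matrix.vecHead, Matrix.vecTail] <;> ring
  constructor
  · intro h t
    have h0 := h 0 t
    rw [key 0 t] at h0
    have e00 : z t - deriv y t = 0 := by
      have := congrFun (congrFun h0 0) 0
      simpa using this
    have e01 : 6*(y t)^2 + t - deriv z t = 0 := by
      have := congrFun (congrFun h0 0) 1
      simpa using this
    constructor
    · linear_combination -e00
    · linear_combination -e01
  · intro h μ t
    rw [key μ t]
    obtain ⟨h1, h2⟩ := h t
    ext i j
    fin_cases i <;> fin_cases j <;>
      simp [h1, h2, Matrix.vecHead, Matrix.vecTail] <;> ring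
end
end

section
/- Let y, z : ℂ → ℂ be holomorphic, and let Φ = (Φ₁,Φ₂,Φ₃) : ℂ×ℂ → ℂ³ be holomorphic in (λ,t) and satisfy the degenerate system [[0,1,0],[0,0,1],[0,0,0]]·∂Φ/∂λ = (−λ·I₃ + [[−y, −z, −(4y²+2t)],[0, y, z],[1/4, 0, 0]])·Φ and ∂Φ/∂t = 2·(λ·[[0,−1,0],[0,0,0],[0,0,0]] + [[0,0,0],[−1/4,0,−2y],[0,−1/4,0]])·Φ. Then Φ₁(λ,t) = 4λ·Φ₃(λ,t) for all (λ,t), and the vector Y := (−Φ₂/4, Φ₃)ᵀ satisfies the Jimbo–Miwa pair for the first Painlevé equation: ∂Y/∂λ = (λ²·[[0,1],[0,0]] + λ·[[0,y],[4,0]] + [[−z, y²+t/2],[−4y, z]])·Y and ∂Y/∂t = ((λ/2)·[[0,1],[0,0]] + [[0,y],[2,0]])·Y. -/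
open Matrix Complex

noncomputable section

/-- If `Φ` is a holomorphic solution of the degenerate pair `dJKT₁`, then
`Φ₁ = 4λ Φ₃` and `Y := (−Φ₂/4, Φ₃)ᵀ` solves the Jimbo–Miwa pair `JM₁` for
the first Painlevé equation. -/
theorem stmt_1 (y z : ℂ → ℂ) (hy : Differentiable ℂ y) (hz : Differentiable ℂ z)
    (Φ : ℂ → ℂ → Fin 3 → ℂ)
    (hΦ : ∀ i, Differentiable ℂ (fun p : ℂ × ℂ => Φ p.1 p.2 i))
    (hlam : ∀ l t : ℂ,
      (!![0,1,0; 0,0,1; 0,0,0] : Matrix (Fin 3) (Fin 3) ℂ).mulVec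
          (fun i => deriv (fun w => Φ w t i) l) =
        ((-l) • (1 : Matrix (Fin 3) (Fin 3) ℂ) +
          !![-y t, -z t, -(4*(y t)^2 + 2*t); 0, y t, z t; 1/4, 0, 0]).mulVec (Φ l t))
    (ht : ∀ l t : ℂ,
      (fun i => deriv (fun s => Φ l s i) t) =
        ((2:ℂ) • (l • (!![0,-1,0; 0,0,0; 0,0,0] : Matrix (Fin 3) (Fin 3) ℂ) +
          !![0,0,0; -1/4, 0, -2*y t; 0, -1/4, 0])).mulVec (Φ l t)) :
    (∀ l t : ℂ, Φ l t 0 = 4 * l * Φ l t 2) ∧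
    (∀ Y : ℂ → ℂ → Fin 2 → ℂ,
      (∀ l t : ℂ, Y l t = ![-(Φ l t 1)/4, Φ l t 2]) →
      (∀ l t : ℂ,
        (fun i => deriv (fun w => Y w t i) l) =
          (l^2 • (!![0,1; 0,0] : Matrix (Fin 2) (Fin 2) ℂ) + l • !![0, y t; 4, 0] +
            !![-z t, (y t)^2 + t/2; -4*y t, z t]).mulVec (Y l t)) ∧
      (∀ l t : ℂ,
        (fun i => deriv (fun s => Y l s i) t) =
          ((l/2) • (!![0,1; 0,0] : Matrix (Fin 2) (Fin 2) ℂ) +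
            !![0, y t; 2, 0]).mulVec (Y l t))) := by
  have key : ∀ l t : ℂ, Φ l t 0 = 4 * l * Φ l t 2 := by
    intro l t
    have h2 := congrFun (hlam l t) 2
    simp [Matrix.mulVec, dotProduct, Fin.sum_univ_three, Matrix.one_apply] at h2
    linear_combination (-4:ℂ) * h2
  refine ⟨key, fun Y hY => ⟨fun l t => ?_, fun l t => ?_⟩⟩
  · have h0 := congrFun (hlam l t) 0
    have h1 := congrFun (hlam l t) 1
    simp [Matrix.mulVec, dotProduct, Fin.sum_univ_three, Matrix.one_apply] at h0 h1
    funext i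
    fin_cases i <;>
      simp [Matrix.mulVec, dotProduct, Fin.sum_univ_two, hY, deriv_div_const, deriv.neg]
    · rw [h0, key l t]; ring
    · rw [h1]; ring
  · have g1 := congrFun (ht l t) 1
    have g2 := congrFun (ht l t) 2
    simp [Matrix.mulVec, dotProduct, Fin.sum_univ_three] at g1 g2
    funext i
    fin_cases i <;>
      simp [Matrix.mulVec, dotProduct, Fin.sum_univ_two, hY, deriv_div_const, deriv.neg]
    · rw [g1, key l t]; ring
    · rw [g2]; ring
end
end

section
/- Let y, z : ℂ → ℂ be holomorphic with y′(t) = z(t) and z′(t) = 6y(t)² + t for all t. Let Ω ⊆ ℂ² be open with λ ≠ y(t) for all (λ,t) ∈ Ω, let Y = (Y₁,Y₂) : Ω → ℂ² be a holomorphic solution of the JM₁ pair, and let s : Ω → ℂ be holomorphic with s(λ,t)² = λ − y(t) on Ω. Define V := Y₂/s. Then on Ω: ∂²V/∂λ² = (3/(4(λ−y)²) − z/(λ−y) + 4λ³ + 2tλ + z² − 4y³ − 2ty)·V and ∂V/∂t = (1/(2(λ−y)))·∂V/∂λ + (1/(4(λ−y)²))·V, i.e. V satisfies the Garnier pair G₁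 for the first Painlevé equation (with y′ = z). -/
open Matrix Complex

noncomputable section

set_option maxHeartbeats 2000000 in
/-- If `Y` solves the Jimbo–Miwa pair `JM₁` on an open set `Ω` avoiding `λ = y(t)`,
`y' = z`, `z' = 6y² + t`, and `s² = λ − y(t)`, then `V := Y₂/s` solves the scalar
Garnier pair `G₁` for the first Painlevé equation on `Ω`. -/
theorem stmt_2 (y z : ℂ → ℂ) (hy : Differentiable ℂ y) (hz : Differentiable ℂ z)
    (hy' : ∀ t : ℂ, deriv y t = z t) (hz' : ∀ t : ℂ, deriv z t = 6 * (y t)^2 + t)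
    (Ω : Set (ℂ × ℂ)) (hΩ : IsOpen Ω)
    (hne : ∀ p ∈ Ω, p.1 ≠ y p.2)
    (Y : ℂ → ℂ → Fin 2 → ℂ)
    (hYdiff : ∀ i, DifferentiableOn ℂ (fun p : ℂ × ℂ => Y p.1 p.2 i) Ω)
    (hYlam : ∀ l t : ℂ, (l, t) ∈ Ω →
      (fun i => deriv (fun w => Y w t i) l) =
        (l^2 • (!![0,1; 0,0] : Matrix (Fin 2) (Fin 2) ℂ) + l • !![0, y t; 4, 0] +
          !![-z t, (y t)^2 + t/2; -4*y t, z t]).mulVec (Y l t))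
    (hYt : ∀ l t : ℂ, (l, t) ∈ Ω →
      (fun i => deriv (fun s => Y l s i) t) =
        ((l/2) • (!![0,1; 0,0] : Matrix (Fin 2) (Fin 2) ℂ) +
          !![0, y t; 2, 0]).mulVec (Y l t))
    (s : ℂ → ℂ → ℂ)
    (hs : DifferentiableOn ℂ (fun p : ℂ × ℂ => s p.1 p.2) Ω)
    (hs2 : ∀ l t : ℂ, (l, t) ∈ Ω → (s l t)^2 = l - y t)
    (V : ℂ → ℂ → ℂ)
    (hV : ∀ l t : ℂ, V l t = Y l t 1 / s l t) :
    ∀ l t : ℂ, (l, t) ∈ Ω →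
      (deriv (fun w => deriv (fun w' => V w' t) w) l =
        (3/(4*(l - y t)^2) - z t/(l - y t) + 4*l^3 + 2*t*l
          + (z t)^2 - 4*(y t)^3 - 2*t*(y t)) * V l t) ∧
      (deriv (fun s' => V l s') t =
        (1/(2*(l - y t))) * deriv (fun w => V w t) l + (1/(4*(l - y t)^2)) * V l t) := by
  -- basic nonvanishing facts
  have hd0 : ∀ w u : ℂ, (w, u) ∈ Ω → w - y u ≠ 0 := fun w u h =>
    sub_ne_zero.mpr (hne (w, u) h)
  have hSne : ∀ w u : ℂ, (w, u) ∈ Ω → s w u ≠ 0 := by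
    intro w u h hzero
    have h2 := hs2 w u h
    rw [hzero] at h2
    exact hd0 w u h (by simpa using h2.symm)
  -- slice differentiability
  have hYdA : ∀ (i : Fin 2) (w u : ℂ), (w, u) ∈ Ω →
      DifferentiableAt ℂ (fun w' => Y w' u i) w := by
    intro i w u h
    have h1 : DifferentiableAt ℂ (fun p : ℂ × ℂ => Y p.1 p.2 i) (w, u) :=
      (hYdiff i).differentiableAt (hΩ.mem_nhds h)
    exact h1.comp w (differentiableAt_id.prodMk (differentiableAt_const u) : DifferentiableAt ℂ (fun w' : ℂ => (w', u)) w)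
  have hYdB : ∀ (i : Fin 2) (w u : ℂ), (w, u) ∈ Ω →
      DifferentiableAt ℂ (fun u' => Y w u' i) u := by
    intro i w u h
    have h1 : DifferentiableAt ℂ (fun p : ℂ × ℂ => Y p.1 p.2 i) (w, u) :=
      (hYdiff i).differentiableAt (hΩ.mem_nhds h)
    exact h1.comp u ((differentiableAt_const w).prodMk differentiableAt_id)
  have hsdA : ∀ w u : ℂ, (w, u) ∈ Ω → DifferentiableAt ℂ (fun w' => s w' u) w := by
    intro w u h
    have h1 : DifferentiableAt ℂ (fun p : ℂ × ℂ => s p.1 p.2) (w, u) :=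
      hs.differentiableAt (hΩ.mem_nhds h)
    exact h1.comp w (differentiableAt_id.prodMk (differentiableAt_const u) : DifferentiableAt ℂ (fun w' : ℂ => (w', u)) w)
  have hsdB : ∀ w u : ℂ, (w, u) ∈ Ω → DifferentiableAt ℂ (fun u' => s w u') u := by
    intro w u h
    have h1 : DifferentiableAt ℂ (fun p : ℂ × ℂ => s p.1 p.2) (w, u) :=
      hs.differentiableAt (hΩ.mem_nhds h)
    exact h1.comp u ((differentiableAt_const w).prodMk differentiableAt_id)
  -- open slices
  have hopenA : ∀ u : ℂ, IsOpen {w : ℂ | (w, u) ∈ Ω} := fun u =>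
    hΩ.preimage (continuous_id.prodMk continuous_const)
  have hopenB : ∀ w : ℂ, IsOpen {u : ℂ | (w, u) ∈ Ω} := fun w =>
    hΩ.preimage (continuous_const.prodMk continuous_id)
  -- component derivative formulas
  have hY0l : ∀ w u : ℂ, (w, u) ∈ Ω → HasDerivAt (fun w' => Y w' u 0)
      (-(z u) * Y w u 0 + (w^2 + w * y u + (y u)^2 + u/2) * Y w u 1) w := by
    intro w u h
    have hder : deriv (fun w' => Y w' u 0) w =
        -(z u) * Y w u 0 + (w^2 + w * y u + (y u)^2 + u/2) * Y w u 1 := by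
      rw [congrFun (hYlam w u h) 0]
      simp only [Matrix.mulVec, dotProduct, Fin.sum_univ_two, Matrix.add_apply,
        Matrix.smul_apply, smul_eq_mul, Matrix.cons_val', Matrix.cons_val_zero,
        Matrix.cons_val_one, Matrix.head_cons, Matrix.empty_val', Matrix.cons_val_fin_one,
        Matrix.head_fin_const, Matrix.of_apply]
      ring
    rw [← hder]; exact (hYdA 0 w u h).hasDerivAt
  have hY1l : ∀ w u : ℂ, (w, u) ∈ Ω → HasDerivAt (fun w' => Y w' u 1)
      (4 * (w - y u) * Y w u 0 + z u * Y w u 1) w := by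
    intro w u h
    have hder : deriv (fun w' => Y w' u 1) w =
        4 * (w - y u) * Y w u 0 + z u * Y w u 1 := by
      rw [congrFun (hYlam w u h) 1]
      simp only [Matrix.mulVec, dotProduct, Fin.sum_univ_two, Matrix.add_apply,
        Matrix.smul_apply, smul_eq_mul, Matrix.cons_val', Matrix.cons_val_zero,
        Matrix.cons_val_one, Matrix.head_cons, Matrix.empty_val', Matrix.cons_val_fin_one,
        Matrix.head_fin_const, Matrix.of_apply]
      ring
    rw [← hder]; exact (hYdA 1 w u h).hasDerivAt
  have hY1t : ∀ w u : ℂ, (w, u) ∈ Ω → HasDerivAt (fun u' => Y w u' 1)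
      (2 * Y w u 0) u := by
    intro w u h
    have hder : deriv (fun u' => Y w u' 1) u = 2 * Y w u 0 := by
      rw [congrFun (hYt w u h) 1]
      simp only [Matrix.mulVec, dotProduct, Fin.sum_univ_two, Matrix.add_apply,
        Matrix.smul_apply, smul_eq_mul, Matrix.cons_val', Matrix.cons_val_zero,
        Matrix.cons_val_one, Matrix.head_cons, Matrix.empty_val', Matrix.cons_val_fin_one,
        Matrix.head_fin_const, Matrix.of_apply]
      ring
    rw [← hder]; exact (hYdB 1 w u h).hasDerivAt
  -- derivatives of s
  have hSl : ∀ w u : ℂ, (w, u) ∈ Ω → HasDerivAt (fun w' => s w' u)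
      (1 / (2 * s w u)) w := by
    intro w u h
    have hd := (hsdA w u h).hasDerivAt
    have hsq : HasDerivAt (fun w' => (s w' u)^2)
        (2 * (s w u) ^ 1 * deriv (fun w' => s w' u) w) w := hd.pow 2
    have hev : (fun w' => (s w' u)^2) =ᶠ[nhds w] (fun w' => w' - y u) := by
      filter_upwards [(hopenA u).mem_nhds h] with w' hw'
      exact hs2 w' u hw'
    have h3 : HasDerivAt (fun w' => w' - y u)
        (2 * (s w u) ^ 1 * deriv (fun w' => s w' u) w) w :=
      hsq.congr_of_eventuallyEq hev.symm
    have h4 : HasDerivAt (fun w' => w' - y u) 1 w := (hasDerivAt_id w).sub_const _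
    have h5 : 2 * (s w u) ^ 1 * deriv (fun w' => s w' u) w = 1 := h3.unique h4
    have h6 : deriv (fun w' => s w' u) w = 1 / (2 * s w u) := by
      rw [eq_div_iff (mul_ne_zero two_ne_zero (hSne w u h))]
      linear_combination h5
    rw [← h6]; exact hd
  have hSt : ∀ w u : ℂ, (w, u) ∈ Ω → HasDerivAt (fun u' => s w u')
      (-(z u) / (2 * s w u)) u := by
    intro w u h
    have hd := (hsdB w u h).hasDerivAt
    have hsq : HasDerivAt (fun u' => (s w u')^2)
        (2 * (s w u) ^ 1 * deriv (fun u' => s w u') u) u := hd.pow 2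
    have hev : (fun u' => (s w u')^2) =ᶠ[nhds u] (fun u' => w - y u') := by
      filter_upwards [(hopenB w).mem_nhds h] with u' hu'
      exact hs2 w u' hu'
    have h3 : HasDerivAt (fun u' => w - y u')
        (2 * (s w u) ^ 1 * deriv (fun u' => s w u') u) u :=
      hsq.congr_of_eventuallyEq hev.symm
    have h4 : HasDerivAt (fun u' => w - y u') (-(z u)) u := by
      simpa [hy' u] using ((hasDerivAt_const u w).fun_sub (hy u).hasDerivAt : HasDerivAt (fun u' => w - y u') _ u)
    have h5 : 2 * (s w u) ^ 1 * deriv (fun u' => s w u') u = -(z u) := h3.unique h4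
    have h6 : deriv (fun u' => s w u') u = -(z u) / (2 * s w u) := by
      rw [eq_div_iff (mul_ne_zero two_ne_zero (hSne w u h))]
      linear_combination h5
    rw [← h6]; exact hd
  -- λ-derivative of V
  have key : ∀ w u : ℂ, (w, u) ∈ Ω → HasDerivAt (fun w' => V w' u)
      (4 * s w u * Y w u 0 + z u * V w u - V w u / (2 * (w - y u))) w := by
    intro w u h
    have hne' : s w u ≠ 0 := hSne w u h
    have h1 := (hY1l w u h).fun_div (hSl w u h) hne'
    have hfun : (fun w' => Y w' u 1 / s w' u) = fun w' => V w' u := by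
      funext w'; rw [hV]
    rw [hfun] at h1
    refine h1.congr_deriv ?_
    rw [hV, ← hs2 w u h]
    field_simp [hne']
  -- t-derivative of V
  have keyT : ∀ w u : ℂ, (w, u) ∈ Ω → HasDerivAt (fun u' => V w u')
      (2 * Y w u 0 / s w u + z u * V w u / (2 * (w - y u))) u := by
    intro w u h
    have hne' : s w u ≠ 0 := hSne w u h
    have h1 := (hY1t w u h).fun_div (hSt w u h) hne'
    have hfun : (fun u' => Y w u' 1 / s w u') = fun u' => V w u' := by
      funext u'; rw [hV]
    rw [hfun] at h1
    refine h1.congr_deriv ?_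
    rw [hV, ← hs2 w u h]
    field_simp [hne']
    ring
  intro l t hmem
  have hne' : s l t ≠ 0 := hSne l t hmem
  have hd0' : l - y t ≠ 0 := hd0 l t hmem
  have hsq : (s l t)^2 = l - y t := hs2 l t hmem
  have hY2 : Y l t 1 = s l t * V l t := by
    rw [hV]; field_simp
  constructor
  · -- second λ-derivative
    have hev : (fun w => deriv (fun w' => V w' t) w) =ᶠ[nhds l]
        (fun w => 4 * s w t * Y w t 0 + z t * V w t - V w t / (2 * (w - y t))) := by
      filter_upwards [(hopenA t).mem_nhds hmem] with w hw
      exact (key w t hw).deriv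
    rw [hev.deriv_eq]
    have hA := ((hSl l t hmem).const_mul (4 : ℂ)).fun_mul (hY0l l t hmem)
    have hB := (key l t hmem).const_mul (z t)
    have hCden : HasDerivAt (fun w => 2 * (w - y t)) (2 * 1) l :=
      ((hasDerivAt_id l).sub_const (y t)).const_mul 2
    have hCne : 2 * (l - y t) ≠ 0 := mul_ne_zero two_ne_zero hd0'
    have hC := (key l t hmem).fun_div hCden hCne
    have hfinal := (hA.fun_add hB).fun_sub hC
    rw [hfinal.deriv]
    rw [hY2]
    set S := s l t with hS
    set Y0 := Y l t 0 with hY0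
    set Vv := V l t with hVv
    set yy := y t with hyy
    set zz := z t with hzz
    have hl : l = S^2 + yy := by linear_combination -hsq
    rw [← hsq]
    rw [hl]
    field_simp [hne']
    ring_nf
  · -- t-derivative equation
    rw [(keyT l t hmem).deriv, (key l t hmem).deriv]
    set S := s l t with hS
    set Y0 := Y l t 0 with hY0
    set Vv := V l t with hVv
    set yy := y t with hyy
    set zz := z t with hzz
    have hl : l = S^2 + yy := by linear_combination -hsq
    rw [← hsq]
    field_simp [hne']
    ring
end
end

section
/- Let y, z : ℂ → ℂ be holomorphic and let Y : ℂ×ℂ → ℂ² (or 2×2 matrices) be a holomorphic solution of the JM₁ pair. Define Z(ζ,t) := [[1, ζ/2],[0,1]]·Y(ζ², t). Then Z satisfies the Fabri-transformed system ∂Z/∂ζ = (4ζ⁴·[[1,0],[0,−1]] + ζ³·[[0,4y],[8,0]] + ζ²·[[−4y,2z],[0,4y]] + ζ·[[−2z, 2y²+t],[−8y, 2z]] + [[0,1/2],[0,0]])·Z and ∂Z/∂t = (ζ·[[1,0],[0,−1]] + [[0,y],[2,0]])·Z, together with the reflection identity Z(−ζ,t) = [[1,−ζ],[0,1]]·Z(ζ,t)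 for all (ζ,t) ∈ ℂ². -/
open Matrix Complex

noncomputable section

/-- If `Y` is a holomorphic solution of the Jimbo–Miwa pair `JM₁`, then
`Z(ζ,t) := [[1,ζ/2],[0,1]]·Y(ζ²,t)` solves the Fabri-transformed pair `JM₁/F`
and satisfies the reflection identity `Z(−ζ,t) = [[1,−ζ],[0,1]]·Z(ζ,t)`. -/
theorem stmt_3 (y z : ℂ → ℂ) (hy : Differentiable ℂ y) (hz : Differentiable ℂ z)
    (Y : ℂ → ℂ → Fin 2 → ℂ)
    (hYdiff : ∀ i, Differentiable ℂ (fun p : ℂ × ℂ => Y p.1 p.2 i))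
    (hYlam : ∀ l t : ℂ,
      (fun i => deriv (fun w => Y w t i) l) =
        (l^2 • (!![0,1; 0,0] : Matrix (Fin 2) (Fin 2) ℂ) + l • !![0, y t; 4, 0] +
          !![-z t, (y t)^2 + t/2; -4*y t, z t]).mulVec (Y l t))
    (hYt : ∀ l t : ℂ,
      (fun i => deriv (fun s => Y l s i) t) =
        ((l/2) • (!![0,1; 0,0] : Matrix (Fin 2) (Fin 2) ℂ) +
          !![0, y t; 2, 0]).mulVec (Y l t))
    (Z : ℂ → ℂ → Fin 2 → ℂ)
    (hZ : ∀ ζ t : ℂ,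
      Z ζ t = (!![1, ζ/2; 0, 1] : Matrix (Fin 2) (Fin 2) ℂ).mulVec (Y (ζ^2) t)) :
    (∀ ζ t : ℂ,
      (fun i => deriv (fun w => Z w t i) ζ) =
        ((4*ζ^4) • (!![1,0; 0,-1] : Matrix (Fin 2) (Fin 2) ℂ)
          + ζ^3 • (!![0, 4*y t; 8, 0] : Matrix (Fin 2) (Fin 2) ℂ)
          + ζ^2 • (!![-4*y t, 2*z t; 0, 4*y t] : Matrix (Fin 2) (Fin 2) ℂ)
          + ζ • (!![-2*z t, 2*(y t)^2 + t; -8*y t, 2*z t] : Matrix (Fin 2) (Fin 2) ℂ)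
          + !![0, 1/2; 0, 0]).mulVec (Z ζ t)) ∧
    (∀ ζ t : ℂ,
      (fun i => deriv (fun s => Z ζ s i) t) =
        (ζ • (!![1,0; 0,-1] : Matrix (Fin 2) (Fin 2) ℂ)
          + !![0, y t; 2, 0]).mulVec (Z ζ t)) ∧
    (∀ ζ t : ℂ,
      Z (-ζ) t = (!![1, -ζ; 0, 1] : Matrix (Fin 2) (Fin 2) ℂ).mulVec (Z ζ t)) := by
  -- differentiability of Y in each variable separately
  have hY1 : ∀ (t : ℂ) (i : Fin 2), Differentiable ℂ (fun w => Y w t i) := by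
    intro t i
    exact (hYdiff i).comp (differentiable_id.prodMk (differentiable_const t))
  have hY2 : ∀ (l : ℂ) (i : Fin 2), Differentiable ℂ (fun s => Y l s i) := by
    intro l i
    exact (hYdiff i).comp ((differentiable_const l).prodMk differentiable_id)
  -- components of Z
  have hZ0 : ∀ ζ t : ℂ, Z ζ t 0 = Y (ζ^2) t 0 + ζ/2 * Y (ζ^2) t 1 := by
    intro ζ t
    have := congrFun (hZ ζ t) 0
    simpa [Matrix.mulVec, dotProduct, Fin.sum_univ_two] using this
  have hZ1 : ∀ ζ t : ℂ, Z ζ t 1 = Y (ζ^2) t 1 := by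
    intro ζ t
    have := congrFun (hZ ζ t) 1
    simpa [Matrix.mulVec, dotProduct, Fin.sum_univ_two] using this
  -- components of the λ-equation
  have hL0 : ∀ l t : ℂ, deriv (fun w => Y w t 0) l =
      (l^2 + l * y t + ((y t)^2 + t/2)) * Y l t 1 + (-z t) * Y l t 0 := by
    intro l t
    have := congrFun (hYlam l t) 0
    simp only [Matrix.mulVec, dotProduct, Fin.sum_univ_two, Matrix.add_apply,
      Matrix.smul_apply, Matrix.of_apply, Matrix.cons_val', Matrix.cons_val_zero, Matrix.cons_val_one,
      Matrix.head_cons, Matrix.head_fin_const, Matrix.empty_val',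
      Matrix.cons_val_fin_one, smul_eq_mul] at this
    rw [this]; ring
  have hL1 : ∀ l t : ℂ, deriv (fun w => Y w t 1) l =
      (l * 4 + (-4 * y t)) * Y l t 0 + z t * Y l t 1 := by
    intro l t
    have := congrFun (hYlam l t) 1
    simp only [Matrix.mulVec, dotProduct, Fin.sum_univ_two, Matrix.add_apply,
      Matrix.smul_apply, Matrix.of_apply, Matrix.cons_val', Matrix.cons_val_zero, Matrix.cons_val_one,
      Matrix.head_cons, Matrix.head_fin_const, Matrix.empty_val',
      Matrix.cons_val_fin_one, smul_eq_mul] at this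
    rw [this]; ring
  -- components of the t-equation
  have hT0 : ∀ l t : ℂ, deriv (fun s => Y l s 0) t =
      (l/2 + y t) * Y l t 1 := by
    intro l t
    have := congrFun (hYt l t) 0
    simp only [Matrix.mulVec, dotProduct, Fin.sum_univ_two, Matrix.add_apply,
      Matrix.smul_apply, Matrix.of_apply, Matrix.cons_val', Matrix.cons_val_zero, Matrix.cons_val_one,
      Matrix.head_cons, Matrix.head_fin_const, Matrix.empty_val',
      Matrix.cons_val_fin_one, smul_eq_mul] at this
    rw [this]; ring
  have hT1 : ∀ l t : ℂ, deriv (fun s => Y l s 1) t = 2 * Y l t 0 := by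
    intro l t
    have := congrFun (hYt l t) 1
    simp only [Matrix.mulVec, dotProduct, Fin.sum_univ_two, Matrix.add_apply,
      Matrix.smul_apply, Matrix.of_apply, Matrix.cons_val', Matrix.cons_val_zero, Matrix.cons_val_one,
      Matrix.head_cons, Matrix.head_fin_const, Matrix.empty_val',
      Matrix.cons_val_fin_one, smul_eq_mul] at this
    rw [this]; ring
  -- derivative of w ↦ Y (w^2) t i
  have HYsq : ∀ (t : ℂ) (i : Fin 2) (ζ : ℂ),
      HasDerivAt (fun w => Y (w^2) t i) (2 * ζ * deriv (fun l => Y l t i) (ζ^2)) ζ := by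
    intro t i ζ
    have h1 : HasDerivAt (fun l => Y l t i) (deriv (fun l => Y l t i) (ζ^2)) (ζ^2) :=
      ((hY1 t i) (ζ^2)).hasDerivAt
    have h2 : HasDerivAt (fun w : ℂ => w^2) (2 * ζ) ζ := by
      simpa using hasDerivAt_pow 2 ζ
    have := h1.comp ζ h2
    simpa [mul_comm, Function.comp_def] using this
  refine ⟨?_, ?_, ?_⟩
  · intro ζ t
    funext i
    -- rewrite Z components as functions of w
    have e0 : (fun w => Z w t 0) = fun w => Y (w^2) t 0 + w/2 * Y (w^2) t 1 := by
      funext w; exact hZ0 w t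
    have e1 : (fun w => Z w t 1) = fun w => Y (w^2) t 1 := by
      funext w; exact hZ1 w t
    have d0 : HasDerivAt (fun w => Z w t 0)
        (2 * ζ * deriv (fun l => Y l t 0) (ζ^2) +
          ((1/2) * Y (ζ^2) t 1 + ζ/2 * (2 * ζ * deriv (fun l => Y l t 1) (ζ^2)))) ζ := by
      rw [e0]
      have hmul : HasDerivAt (fun w : ℂ => w/2 * Y (w^2) t 1)
          ((1/2) * Y (ζ^2) t 1 + ζ/2 * (2 * ζ * deriv (fun l => Y l t 1) (ζ^2))) ζ := by
        have ha : HasDerivAt (fun w : ℂ => w/2) (1/2 : ℂ) ζ := by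
          simpa using (hasDerivAt_id ζ).div_const 2
        exact ha.mul (HYsq t 1 ζ)
      exact (HYsq t 0 ζ).add hmul
    have d1 : HasDerivAt (fun w => Z w t 1)
        (2 * ζ * deriv (fun l => Y l t 1) (ζ^2)) ζ := by
      rw [e1]; exact HYsq t 1 ζ
    fin_cases i <;> simp only [Fin.mk_zero, Fin.mk_one, Fin.zero_eta, Fin.isValue]
    · rw [d0.deriv]
      simp only [Matrix.mulVec, dotProduct, Fin.sum_univ_two, Matrix.add_apply,
        Matrix.smul_apply, Matrix.of_apply, Matrix.cons_val', Matrix.cons_val_zero, Matrix.cons_val_one,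
        Matrix.head_cons, Matrix.head_fin_const, Matrix.empty_val',
        Matrix.cons_val_fin_one, smul_eq_mul]
      rw [hL0, hL1, hZ0, hZ1]; ring
    · rw [d1.deriv]
      simp only [Matrix.mulVec, dotProduct, Fin.sum_univ_two, Matrix.add_apply,
        Matrix.smul_apply, Matrix.of_apply, Matrix.cons_val', Matrix.cons_val_zero, Matrix.cons_val_one,
        Matrix.head_cons, Matrix.head_fin_const, Matrix.empty_val',
        Matrix.cons_val_fin_one, smul_eq_mul]
      rw [hL1, hZ0, hZ1]; ring
  · intro ζ t
    funext i
    have e0 : (fun s => Z ζ s 0) = fun s => Y (ζ^2) s 0 + ζ/2 * Y (ζ^2) s 1 := by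
      funext s; exact hZ0 ζ s
    have e1 : (fun s => Z ζ s 1) = fun s => Y (ζ^2) s 1 := by
      funext s; exact hZ1 ζ s
    have d0 : HasDerivAt (fun s => Z ζ s 0)
        (deriv (fun s => Y (ζ^2) s 0) t + ζ/2 * deriv (fun s => Y (ζ^2) s 1) t) t := by
      rw [e0]
      exact ((hY2 (ζ^2) 0 t).hasDerivAt).add
        (((hY2 (ζ^2) 1 t).hasDerivAt).const_mul (ζ/2))
    have d1 : HasDerivAt (fun s => Z ζ s 1) (deriv (fun s => Y (ζ^2) s 1) t) t := by
      rw [e1]; exact (hY2 (ζ^2) 1 t).hasDerivAt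
    fin_cases i <;> simp only [Fin.mk_zero, Fin.mk_one, Fin.zero_eta, Fin.isValue]
    · rw [d0.deriv]
      simp only [Matrix.mulVec, dotProduct, Fin.sum_univ_two, Matrix.add_apply,
        Matrix.smul_apply, Matrix.of_apply, Matrix.cons_val', Matrix.cons_val_zero, Matrix.cons_val_one,
        Matrix.head_cons, Matrix.head_fin_const, Matrix.empty_val',
        Matrix.cons_val_fin_one, smul_eq_mul]
      rw [hT0, hT1, hZ0, hZ1]; ring
    · rw [d1.deriv]
      simp only [Matrix.mulVec, dotProduct, Fin.sum_univ_two, Matrix.add_apply,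
        Matrix.smul_apply, Matrix.of_apply, Matrix.cons_val', Matrix.cons_val_zero, Matrix.cons_val_one,
        Matrix.head_cons, Matrix.head_fin_const, Matrix.empty_val',
        Matrix.cons_val_fin_one, smul_eq_mul]
      rw [hT1, hZ0, hZ1]; ring
  · intro ζ t
    funext i
    have hsq : (-ζ)^2 = ζ^2 := by ring
    fin_cases i <;> simp only [Fin.mk_zero, Fin.mk_one, Fin.zero_eta, Fin.isValue]
    · simp only [Matrix.mulVec, dotProduct, Fin.sum_univ_two, Matrix.of_apply, Matrix.cons_val',
        Matrix.cons_val_zero, Matrix.cons_val_one, Matrix.head_cons,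
        Matrix.empty_val', Matrix.cons_val_fin_one]
      rw [hZ0, hZ1, hZ0, hsq]; ring
    · simp only [Matrix.mulVec, dotProduct, Fin.sum_univ_two, Matrix.of_apply, Matrix.cons_val',
        Matrix.cons_val_zero, Matrix.cons_val_one, Matrix.head_cons,
        Matrix.empty_val', Matrix.cons_val_fin_one]
      simp [Matrix.vecHead]
      rw [hZ1, hZ1, hsq]
end
end

section
/- Let θ ∈ ℂ, α = 1/2 − θ, and let y : ℂ → ℂ be a holomorphic solution of y″ = 2y³ + t·y + α; set z(t) := y′(t) − y(t)² − t/2. Let W be a holomorphic solution on (ℂ∖{0})×ℂ of the HTW pair with parameter θ and coefficient functions y, z. Let D ⊆ ℂ∖{0} be open and g : D → ℂ holomorphic with g(ζ)² = i/(2ζ) on D. Define Z(ζ,t) := (1/√2)·[[1,−1],[1,1]]·[[g(ζ),0],[0,1/g(ζ)]]·W(−2ζ², t). Then Z satisfies the Flaschka–Newell pair on D×ℂ: ∂Z/∂ζ = (−4iζ²σ₃ + 4yζσ₁ − 2y′σ₂ − i(2y²+t)σ₃ − (α/ζ)σ₁)·Z and ∂Z/∂t = (−iζσ₃ + yσ₁)·Z,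 where σ₁ = [[0,1],[1,0]], σ₂ = [[0,−i],[i,0]], σ₃ = [[1,0],[0,−1]]. -/
open Matrix Complex

noncomputable section

def σ₁ : Matrix (Fin 2) (Fin 2) ℂ := !![0, 1; 1, 0]
def σ₂ : Matrix (Fin 2) (Fin 2) ℂ := !![0, -Complex.I; Complex.I, 0]
def σ₃ : Matrix (Fin 2) (Fin 2) ℂ := !![1, 0; 0, -1]

set_option maxHeartbeats 1000000 in
/-- The Fabri-type transformation `Z(ζ,t) = (1/√2)·[[1,−1],[1,1]]·diag(g(ζ),1/g(ζ))·W(−2ζ²,t)`,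
with `g(ζ)² = i/(2ζ)`, maps a solution `W` of the Harnad–Tracy–Widom pair with parameter `θ`
(where `z = y' − y² − t/2` and `y` solves `P₂` with `α = 1/2 − θ`) to a solution `Z` of the
Flaschka–Newell pair with parameter `α`. -/
theorem stmt_9 (θ α : ℂ) (hα : α = 1/2 - θ)
    (y : ℂ → ℂ) (hy : Differentiable ℂ y)
    (hP2 : ∀ t : ℂ, deriv (deriv y) t = 2*(y t)^3 + t*(y t) + α)
    (z : ℂ → ℂ) (hz : ∀ t : ℂ, z t = deriv y t - (y t)^2 - t/2)
    (W : ℂ → ℂ → Fin 2 → ℂ)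
    (hWdiff : ∀ i, DifferentiableOn ℂ (fun p : ℂ × ℂ => W p.1 p.2 i) {p | p.1 ≠ 0})
    (hWμ : ∀ μ : ℂ, μ ≠ 0 → ∀ t : ℂ,
      (fun i => deriv (fun m => W m t i) μ) =
        (μ • (!![0,1; 0,0] : Matrix (Fin 2) (Fin 2) ℂ) +
          !![-y t, -(z t + 2*(y t)^2 + t); 1/2, y t] +
          (1/(2*μ)) • !![θ, 0; z t, -θ]).mulVec (W μ t))
    (hWt : ∀ μ : ℂ, μ ≠ 0 → ∀ t : ℂ,
      (fun i => deriv (fun s => W μ s i) t) =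
        (-(μ • (!![0,1; 0,0] : Matrix (Fin 2) (Fin 2) ℂ) +
          !![-y t, 0; 1/2, y t])).mulVec (W μ t))
    (D : Set ℂ) (hD : IsOpen D) (hD0 : ∀ ζ ∈ D, ζ ≠ (0:ℂ))
    (g : ℂ → ℂ) (hg : DifferentiableOn ℂ g D)
    (hg2 : ∀ ζ ∈ D, (g ζ)^2 = Complex.I/(2*ζ))
    (Z : ℂ → ℂ → Fin 2 → ℂ)
    (hZ : ∀ ζ t : ℂ, Z ζ t =
      ((Real.sqrt 2 : ℂ))⁻¹ •
        ((!![1,-1; 1,1] : Matrix (Fin 2) (Fin 2) ℂ) *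
          !![g ζ, 0; 0, (g ζ)⁻¹]).mulVec (W (-2*ζ^2) t)) :
    ∀ ζ ∈ D, ∀ t : ℂ,
      ((fun i => deriv (fun w => Z w t i) ζ) =
        ((-4*Complex.I*ζ^2) • σ₃ + (4*(y t)*ζ) • σ₁ + (-2*deriv y t) • σ₂
          + (-(Complex.I*(2*(y t)^2 + t))) • σ₃ + (-(α/ζ)) • σ₁).mulVec (Z ζ t)) ∧
      ((fun i => deriv (fun s => Z ζ s i) t) =
        ((-Complex.I*ζ) • σ₃ + (y t) • σ₁).mulVec (Z ζ t)) := by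
  subst hα
  intro ζ hζD t
  have hζ : ζ ≠ 0 := hD0 ζ hζD
  have hμ : (-2*ζ^2 : ℂ) ≠ 0 := by simp [pow_eq_zero_iff, hζ]
  have hζ1 : ζ * ζ⁻¹ = 1 := mul_inv_cancel₀ hζ
  have hIsq : Complex.I^2 = -1 := Complex.I_sq
  set c : ℂ := ((Real.sqrt 2 : ℂ))⁻¹ with hc
  -- facts about g
  have hgsq : (g ζ)^2 = Complex.I/(2*ζ) := hg2 ζ hζD
  have hgne : g ζ ≠ 0 := by
    intro h
    rw [h] at hgsq
    exact hζ (by simpa using hgsq.symm)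
  have hgsq' : (g ζ)^2 * (2*ζ) = Complex.I := by
    field_simp [hζ] at hgsq; linear_combination hgsq
  have hGinv : (g ζ)⁻¹ = -2*Complex.I*ζ*(g ζ) := by
    refine inv_eq_of_mul_eq_one_left ?_
    linear_combination (-Complex.I) * hgsq' - Complex.I_sq
  -- derivative of g
  have hgdiff : DifferentiableAt ℂ g ζ := hg.differentiableAt (hD.mem_nhds hζD)
  have hgd : HasDerivAt g (deriv g ζ) ζ := hgdiff.hasDerivAt
  have heq : (fun w => (g w)^2) =ᶠ[nhds ζ] (fun w => Complex.I/(2*w)) :=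
    Filter.eventuallyEq_of_mem (hD.mem_nhds hζD) (fun w hw => hg2 w hw)
  have hd1 : deriv (fun w => (g w)^2) ζ = deriv (fun w => Complex.I/(2*w)) ζ := heq.deriv_eq
  have hl : deriv (fun w => (g w)^2) ζ = 2 * g ζ * deriv g ζ := by
    have := hgd.fun_pow 2
    simpa using this.deriv
  have hr : deriv (fun w => Complex.I/(2*w)) ζ = -Complex.I/(2*ζ^2) := by
    have h2 : HasDerivAt (fun w : ℂ => 2*w) 2 ζ := by
      simpa using (hasDerivAt_id ζ).const_mul (2:ℂ)
    have h3 := h2.fun_inv (by simpa using hζ)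
    have h4 := h3.const_mul Complex.I
    have h5 : (fun w : ℂ => Complex.I * (2*w)⁻¹) = (fun w => Complex.I/(2*w)) := by
      funext w; rw [div_eq_mul_inv]
    rw [← h5, h4.deriv]
    field_simp
  have hg' : deriv g ζ = -(g ζ)/(2*ζ) := by
    have h6 : 2 * g ζ * deriv g ζ = -Complex.I/(2*ζ^2) := by rw [← hl, hd1, hr]
    rw [eq_div_iff (by simp [pow_eq_zero_iff, hζ] : (2*ζ^2:ℂ) ≠ 0)] at h6
    have key : (2*ζ*g ζ) * (deriv g ζ * (2*ζ)) = (2*ζ*g ζ) * (-g ζ) := by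
      linear_combination h6 + hgsq'
    have key2 := mul_left_cancel₀ (by simp [hζ, hgne] : (2*ζ*g ζ) ≠ 0) key
    rw [eq_div_iff (by simp [hζ] : (2*ζ:ℂ) ≠ 0)]
    linear_combination key2
  have hgd2 : HasDerivAt g (-(g ζ)/(2*ζ)) ζ := hg' ▸ hgd
  have hginvd : HasDerivAt (fun w => (g w)⁻¹) (-Complex.I * g ζ) ζ := by
    have h7 := hgd2.fun_inv hgne
    have h8 : -(-(g ζ)/(2*ζ)) / (g ζ)^2 = -Complex.I * g ζ := by
      rw [div_eq_iff (pow_ne_zero 2 hgne), neg_div, neg_neg, div_eq_iff (by simp [hζ])]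
      linear_combination (Complex.I * g ζ) * hgsq' + (g ζ) * Complex.I_sq
    exact h8 ▸ h7
  -- differentiability of W slices
  have hopen : IsOpen {p : ℂ × ℂ | p.1 ≠ 0} := IsOpen.preimage continuous_fst isOpen_ne
  have hWat : ∀ j, DifferentiableAt ℂ (fun p : ℂ × ℂ => W p.1 p.2 j) (-2*ζ^2, t) :=
    fun j => (hWdiff j).differentiableAt (hopen.mem_nhds hμ)
  have hWm : ∀ j, DifferentiableAt ℂ (fun m => W m t j) (-2*ζ^2) := by
    intro j
    have hp : DifferentiableAt ℂ (fun m : ℂ => (m, t)) (-2*ζ^2) :=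
      (differentiableAt_id).prodMk (differentiableAt_const t)
    have := (hWat j).comp (-2*ζ^2 : ℂ) hp
    simpa [Function.comp_def] using this
  have hWs : ∀ j, DifferentiableAt ℂ (fun s => W (-2*ζ^2) s j) t := by
    intro j
    have := (hWat j).comp t ((differentiableAt_const (-2*ζ^2 : ℂ)).prodMk differentiableAt_id)
    simpa [Function.comp_def] using this
  have hquad : HasDerivAt (fun w : ℂ => -2*w^2) (-4*ζ) ζ := by
    have h1 : HasDerivAt (fun w : ℂ => w^2) (2*ζ) ζ := by simpa using hasDerivAt_pow 2 ζ
    have h2 := h1.const_mul (-2:ℂ)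
    have h3 : (-4*ζ:ℂ) = -2*(2*ζ) := by ring
    exact h3 ▸ h2
  have hWc : ∀ j, HasDerivAt (fun w => W (-2*w^2) t j)
      (deriv (fun m => W m t j) (-2*ζ^2) * (-4*ζ)) ζ := by
    intro j
    have := ((hWm j).hasDerivAt).comp ζ hquad
    simpa [Function.comp_def] using this
  -- components of the HTW μ-equation
  have hP0 : deriv (fun m => W m t 0) (-2*ζ^2) =
      (-(y t) + θ/(2*(-2*ζ^2))) * W (-2*ζ^2) t 0 +
        ((-2*ζ^2) - (z t + 2*(y t)^2 + t)) * W (-2*ζ^2) t 1 := by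
    have h := congrFun (hWμ (-2*ζ^2) hμ t) 0
    simp [Matrix.mulVec, dotProduct, Fin.sum_univ_two, Matrix.add_apply,
      Matrix.smul_apply, smul_eq_mul] at h
    rw [show (-2*ζ^2 : ℂ) = -(2*ζ^2) by ring, h]; ring
  have hP1 : deriv (fun m => W m t 1) (-2*ζ^2) =
      (1/2 + z t/(2*(-2*ζ^2))) * W (-2*ζ^2) t 0 +
        (y t - θ/(2*(-2*ζ^2))) * W (-2*ζ^2) t 1 := by
    have h := congrFun (hWμ (-2*ζ^2) hμ t) 1
    simp [Matrix.mulVec, dotProduct, Fin.sum_univ_two, Matrix.add_apply,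
      Matrix.smul_apply, smul_eq_mul] at h
    rw [show (-2*ζ^2 : ℂ) = -(2*ζ^2) by ring, h]; ring
  -- components of the HTW t-equation
  have hQ0 : deriv (fun s => W (-2*ζ^2) s 0) t =
      y t * W (-2*ζ^2) t 0 + (2*ζ^2) * W (-2*ζ^2) t 1 := by
    have h := congrFun (hWt (-2*ζ^2) hμ t) 0
    simp [Matrix.mulVec, dotProduct, Fin.sum_univ_two, Matrix.add_apply,
      Matrix.neg_apply, Matrix.smul_apply, smul_eq_mul] at h
    rw [show (-2*ζ^2 : ℂ) = -(2*ζ^2) by ring, h]; ring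
  have hQ1 : deriv (fun s => W (-2*ζ^2) s 1) t =
      -(1/2) * W (-2*ζ^2) t 0 - y t * W (-2*ζ^2) t 1 := by
    have h := congrFun (hWt (-2*ζ^2) hμ t) 1
    simp [Matrix.mulVec, dotProduct, Fin.sum_univ_two, Matrix.add_apply,
      Matrix.neg_apply, Matrix.smul_apply, smul_eq_mul] at h
    rw [show (-2*ζ^2 : ℂ) = -(2*ζ^2) by ring, h]; ring
  -- components of Z
  have hZ0 : Z ζ t 0 = c * (g ζ * W (-2*ζ^2) t 0 - (g ζ)⁻¹ * W (-2*ζ^2) t 1) := by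
    rw [hZ]
    simp only [Pi.smul_apply, smul_eq_mul, Matrix.of_apply, Matrix.mulVec, dotProduct,
      Fin.sum_univ_two, Matrix.mul_apply, Matrix.cons_val', Matrix.cons_val_zero,
      Matrix.cons_val_one, Matrix.head_cons, Matrix.empty_val', Matrix.cons_val_fin_one,
      Matrix.head_fin_const]
    ring
  have hZ1 : Z ζ t 1 = c * (g ζ * W (-2*ζ^2) t 0 + (g ζ)⁻¹ * W (-2*ζ^2) t 1) := by
    rw [hZ]
    simp only [Pi.smul_apply, smul_eq_mul, Matrix.of_apply, Matrix.mulVec, dotProduct,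
      Fin.sum_univ_two, Matrix.mul_apply, Matrix.cons_val', Matrix.cons_val_zero,
      Matrix.cons_val_one, Matrix.head_cons, Matrix.empty_val', Matrix.cons_val_fin_one,
      Matrix.head_fin_const]
    ring
  constructor
  · -- ζ-equation
    funext i
    have hfun0 : (fun w => Z w t 0) =
        (fun w => c * (g w * W (-2*w^2) t 0 - (g w)⁻¹ * W (-2*w^2) t 1)) := by
      funext w; rw [hZ]
      simp only [Pi.smul_apply, smul_eq_mul, Matrix.of_apply, Matrix.mulVec, dotProduct,
        Fin.sum_univ_two, Matrix.mul_apply, Matrix.cons_val', Matrix.cons_val_zero,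
        Matrix.cons_val_one, Matrix.head_cons, Matrix.empty_val', Matrix.cons_val_fin_one,
        Matrix.head_fin_const]
      ring
    have hfun1 : (fun w => Z w t 1) =
        (fun w => c * (g w * W (-2*w^2) t 0 + (g w)⁻¹ * W (-2*w^2) t 1)) := by
      funext w; rw [hZ]
      simp only [Pi.smul_apply, smul_eq_mul, Matrix.of_apply, Matrix.mulVec, dotProduct,
        Fin.sum_univ_two, Matrix.mul_apply, Matrix.cons_val', Matrix.cons_val_zero,
        Matrix.cons_val_one, Matrix.head_cons, Matrix.empty_val', Matrix.cons_val_fin_one,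
        Matrix.head_fin_const]
      ring
    have hd0 : HasDerivAt (fun w => c * (g w * W (-2*w^2) t 0 - (g w)⁻¹ * W (-2*w^2) t 1))
        (c * ((-(g ζ)/(2*ζ) * W (-2*ζ^2) t 0 +
            g ζ * (deriv (fun m => W m t 0) (-2*ζ^2) * (-4*ζ))) -
          (-Complex.I * g ζ * W (-2*ζ^2) t 1 +
            (g ζ)⁻¹ * (deriv (fun m => W m t 1) (-2*ζ^2) * (-4*ζ))))) ζ :=
      ((hgd2.mul (hWc 0)).sub (hginvd.mul (hWc 1))).const_mul c
    have hd1' : HasDerivAt (fun w => c * (g w * W (-2*w^2) t 0 + (g w)⁻¹ * W (-2*w^2) t 1))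
        (c * ((-(g ζ)/(2*ζ) * W (-2*ζ^2) t 0 +
            g ζ * (deriv (fun m => W m t 0) (-2*ζ^2) * (-4*ζ))) +
          (-Complex.I * g ζ * W (-2*ζ^2) t 1 +
            (g ζ)⁻¹ * (deriv (fun m => W m t 1) (-2*ζ^2) * (-4*ζ))))) ζ :=
      ((hgd2.mul (hWc 0)).add (hginvd.mul (hWc 1))).const_mul c
    fin_cases i
    · show deriv (fun w => Z w t 0) ζ = _
      rw [hfun0, hd0.deriv, hP0, hP1]
      simp only [σ₁, σ₂, σ₃, Matrix.mulVec, dotProduct, Fin.sum_univ_two,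
        Matrix.add_apply, Matrix.smul_apply, Matrix.cons_val', Matrix.cons_val_zero,
        Matrix.cons_val_one, Matrix.head_cons, Matrix.empty_val', Matrix.cons_val_fin_one,
        Matrix.head_fin_const, smul_eq_mul, Matrix.of_apply, Fin.zero_eta, Fin.mk_one]
      rw [hZ0, hZ1, hGinv, hz t]
      field_simp [hζ]
      linear_combination (c*(W (-(2*ζ^2)) t 1)*(16*ζ^2*(y t)^2 + 16*ζ^2*(deriv y t) + 8*ζ^2*t + 32*ζ^4)) * hIsq
    · show deriv (fun w => Z w t 1) ζ = _
      rw [hfun1, hd1'.deriv, hP0, hP1]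
      simp only [σ₁, σ₂, σ₃, Matrix.mulVec, dotProduct, Fin.sum_univ_two,
        Matrix.add_apply, Matrix.smul_apply, Matrix.cons_val', Matrix.cons_val_zero,
        Matrix.cons_val_one, Matrix.head_cons, Matrix.empty_val', Matrix.cons_val_fin_one,
        Matrix.head_fin_const, smul_eq_mul, Matrix.of_apply, Fin.zero_eta, Fin.mk_one]
      rw [hZ0, hZ1, hGinv, hz t]
      field_simp [hζ]
      linear_combination (c*(W (-(2*ζ^2)) t 1)*(16*ζ^2*(y t)^2 + 16*ζ^2*(deriv y t) + 8*ζ^2*t + 32*ζ^4)) * hIsq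
  · -- t-equation
    funext i
    have hfunt0 : (fun s => Z ζ s 0) =
        (fun s => c * (g ζ * W (-2*ζ^2) s 0 - (g ζ)⁻¹ * W (-2*ζ^2) s 1)) := by
      funext s; rw [hZ]
      simp only [Pi.smul_apply, smul_eq_mul, Matrix.of_apply, Matrix.mulVec, dotProduct,
        Fin.sum_univ_two, Matrix.mul_apply, Matrix.cons_val', Matrix.cons_val_zero,
        Matrix.cons_val_one, Matrix.head_cons, Matrix.empty_val', Matrix.cons_val_fin_one,
        Matrix.head_fin_const]
      ring
    have hfunt1 : (fun s => Z ζ s 1) =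
        (fun s => c * (g ζ * W (-2*ζ^2) s 0 + (g ζ)⁻¹ * W (-2*ζ^2) s 1)) := by
      funext s; rw [hZ]
      simp only [Pi.smul_apply, smul_eq_mul, Matrix.of_apply, Matrix.mulVec, dotProduct,
        Fin.sum_univ_two, Matrix.mul_apply, Matrix.cons_val', Matrix.cons_val_zero,
        Matrix.cons_val_one, Matrix.head_cons, Matrix.empty_val', Matrix.cons_val_fin_one,
        Matrix.head_fin_const]
      ring
    have hdt0 : HasDerivAt (fun s => c * (g ζ * W (-2*ζ^2) s 0 - (g ζ)⁻¹ * W (-2*ζ^2) s 1))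
        (c * (g ζ * deriv (fun s => W (-2*ζ^2) s 0) t -
          (g ζ)⁻¹ * deriv (fun s => W (-2*ζ^2) s 1) t)) t :=
      ((((hWs 0).hasDerivAt).const_mul (g ζ)).sub
        (((hWs 1).hasDerivAt).const_mul ((g ζ)⁻¹))).const_mul c
    have hdt1 : HasDerivAt (fun s => c * (g ζ * W (-2*ζ^2) s 0 + (g ζ)⁻¹ * W (-2*ζ^2) s 1))
        (c * (g ζ * deriv (fun s => W (-2*ζ^2) s 0) t +
          (g ζ)⁻¹ * deriv (fun s => W (-2*ζ^2) s 1) t)) t :=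
      ((((hWs 0).hasDerivAt).const_mul (g ζ)).add
        (((hWs 1).hasDerivAt).const_mul ((g ζ)⁻¹))).const_mul c
    fin_cases i
    · show deriv (fun s => Z ζ s 0) t = _
      rw [hfunt0, hdt0.deriv, hQ0, hQ1]
      simp only [σ₁, σ₂, σ₃, Matrix.mulVec, dotProduct, Fin.sum_univ_two,
        Matrix.add_apply, Matrix.smul_apply, Matrix.cons_val', Matrix.cons_val_zero,
        Matrix.cons_val_one, Matrix.head_cons, Matrix.empty_val', Matrix.cons_val_fin_one,
        Matrix.head_fin_const, smul_eq_mul, Matrix.of_apply, Fin.zero_eta, Fin.mk_one]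
      rw [hZ0, hZ1, hGinv]
      field_simp [hζ]
      linear_combination (0:ℂ) * hζ1 + ((2:ℂ)*(((Real.sqrt 2:ℝ)):ℂ)⁻¹*(W (-(2*ζ^2)) t 1)*ζ^2) * hIsq
    · show deriv (fun s => Z ζ s 1) t = _
      rw [hfunt1, hdt1.deriv, hQ0, hQ1]
      simp only [σ₁, σ₂, σ₃, Matrix.mulVec, dotProduct, Fin.sum_univ_two,
        Matrix.add_apply, Matrix.smul_apply, Matrix.cons_val', Matrix.cons_val_zero,
        Matrix.cons_val_one, Matrix.head_cons, Matrix.empty_val', Matrix.cons_val_fin_one,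
        Matrix.head_fin_const, smul_eq_mul, Matrix.of_apply, Fin.zero_eta, Fin.mk_one]
      rw [hZ0, hZ1, hGinv]
      field_simp [hζ]
      linear_combination (0:ℂ) * hζ1 + ((2:ℂ)*(((Real.sqrt 2:ℝ)):ℂ)⁻¹*(W (-(2*ζ^2)) t 1)*ζ^2) * hIsq
end
end

section
/- Let κ₁ ∈ ℂ, set κ₂ = −1, let θ := 1 + κ₁, and let u, y, z : ℂ → ℂ be holomorphic with u(t) ≠ 0 and u′(t) = −y(t)u(t) for all t. Let Φ = (Φ₁,Φ₂,Φ₃) : ℂ² → ℂ³ be a holomorphic solution of the JKT₂ pair with κ₂ = −1: [[−1, λ+y, 0],[0, −1/2, λ],[0, 0, −1]]·∂Φ/∂λ = [[z+2y²+t, −1−κ₁, 0],[−y, −z/2, 0],[1, 0, 0]]·Φ and ∂Φ/∂t = [[−λ, z/2, 0],[−1, y, 0],[0, −1/2, −y]]·Φ. Then Y(λ,t) := exp(λ³/3 + λt/2)·(−u(t)·Φ₂(λ,t), 2·Φ₁(λ,t))ᵀ satisfies the Jimbo–Miwa pair JM₂ with parameter θ = 1 + κ₁: ∂Y/∂λ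 = (λ²·[[1,0],[0,−1]] + λ·[[0,u],[−2z/u,0]] + [[z+t/2, −uy],[−2(yz+θ)/u, −z−t/2]])·Y and ∂Y/∂t = ((λ/2)·[[1,0],[0,−1]] + (1/2)·[[0,u],[−2z/u,0]])·Y. -/
open Matrix Complex

noncomputable section

/-- If `Φ` is a holomorphic solution of the `JKT₂` pair with `κ₂ = −1`, and
`u' = −yu` with `u` nowhere zero, then
`Y := exp(λ³/3 + λt/2)·(−u·Φ₂, 2·Φ₁)ᵀ` solves the Jimbo–Miwa pair `JM₂`
with parameter `θ = 1 + κ₁`. -/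
theorem stmt_11 (κ₁ θ : ℂ) (hθ : θ = 1 + κ₁)
    (u y z : ℂ → ℂ)
    (hu : Differentiable ℂ u) (hy : Differentiable ℂ y) (hz : Differentiable ℂ z)
    (hu0 : ∀ t : ℂ, u t ≠ 0) (hu' : ∀ t : ℂ, deriv u t = -(y t) * u t)
    (Φ : ℂ → ℂ → Fin 3 → ℂ)
    (hΦ : ∀ i, Differentiable ℂ (fun p : ℂ × ℂ => Φ p.1 p.2 i))
    (hlam : ∀ l t : ℂ,
      (!![-1, l + y t, 0; 0, -1/2, l; 0, 0, -1] : Matrix (Fin 3) (Fin 3) ℂ).mulVec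
          (fun i => deriv (fun w => Φ w t i) l) =
        (!![z t + 2*(y t)^2 + t, -1-κ₁, 0; -y t, -(z t)/2, 0; 1, 0, 0] :
          Matrix (Fin 3) (Fin 3) ℂ).mulVec (Φ l t))
    (ht : ∀ l t : ℂ,
      (fun i => deriv (fun s => Φ l s i) t) =
        (!![-l, (z t)/2, 0; -1, y t, 0; 0, -1/2, -y t] :
          Matrix (Fin 3) (Fin 3) ℂ).mulVec (Φ l t))
    (Y : ℂ → ℂ → Fin 2 → ℂ)
    (hY : ∀ l t : ℂ,
      Y l t = Complex.exp (l^3/3 + l*t/2) • ![-(u t) * Φ l t 1, 2 * Φ l t 0]) :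
    (∀ l t : ℂ,
      (fun i => deriv (fun w => Y w t i) l) =
        (l^2 • (!![1,0; 0,-1] : Matrix (Fin 2) (Fin 2) ℂ) +
          l • !![0, u t; -2*z t/u t, 0] +
          !![z t + t/2, -(u t)*(y t);
            -2*(y t*z t + θ)/u t, -(z t) - t/2]).mulVec (Y l t)) ∧
    (∀ l t : ℂ,
      (fun i => deriv (fun s => Y l s i) t) =
        ((l/2) • (!![1,0; 0,-1] : Matrix (Fin 2) (Fin 2) ℂ) +
          (1/2 : ℂ) • !![0, u t; -2*z t/u t, 0]).mulVec (Y l t)) := by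
  have hΦl : ∀ (t : ℂ) (i : Fin 3), Differentiable ℂ (fun w => Φ w t i) :=
    fun t i => (hΦ i).comp (differentiable_id.prodMk (differentiable_const t))
  have hΦt : ∀ (l : ℂ) (i : Fin 3), Differentiable ℂ (fun s => Φ l s i) :=
    fun l i => (hΦ i).comp ((differentiable_const l).prodMk differentiable_id)
  constructor
  · intro l t
    -- extract scalar λ-equations
    have H0 := congrFun (hlam l t) 0
    have H1 := congrFun (hlam l t) 1
    have H2 := congrFun (hlam l t) 2
    simp [Matrix.mulVec, dotProduct, Fin.sum_univ_three] at H0 H1 H2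
    set d0 := deriv (fun w => Φ w t 0) l with hd0def
    set d1 := deriv (fun w => Φ w t 1) l with hd1def
    set d2 := deriv (fun w => Φ w t 2) l with hd2def
    have hd1 : d1 = (2*(y t) - 2*l) * Φ l t 0 + z t * Φ l t 1 := by
      linear_combination (-2 : ℂ) * H1 - 2*l*H2
    have hd0 : d0 = (-2*l^2 - z t - t) * Φ l t 0 + (l * z t + y t * z t + θ) * Φ l t 1 := by
      rw [hθ]; linear_combination (-1 : ℂ) * H0 + (l + y t) * hd1
    -- derivatives of the exponential factor
    have hg : HasDerivAt (fun w : ℂ => w^3/3 + w*t/2) (l^2 + t/2) l := by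
      have h1 : HasDerivAt (fun w : ℂ => w^3/3 + w*t/2)
          ((↑3 * l^(3-1))/3 + (1*t)/2) l :=
        ((hasDerivAt_pow 3 l).div_const 3).add (((hasDerivAt_id l).mul_const t).div_const 2)
      convert h1 using 1; push_cast; ring
    have hexp : HasDerivAt (fun w : ℂ => Complex.exp (w^3/3 + w*t/2))
        (Complex.exp (l^3/3 + l*t/2) * (l^2 + t/2)) l := hg.cexp
    have hD1 : HasDerivAt (fun w => Φ w t 1) d1 l := ((hΦl t 1) l).hasDerivAt
    have hD0 : HasDerivAt (fun w => Φ w t 0) d0 l := ((hΦl t 0) l).hasDerivAt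
    have hY0 : HasDerivAt (fun w => Y w t 0)
        (Complex.exp (l^3/3 + l*t/2) * (l^2 + t/2) * (-(u t) * Φ l t 1)
          + Complex.exp (l^3/3 + l*t/2) * (-(u t) * d1)) l := by
      have : (fun w => Y w t 0) = fun w =>
          Complex.exp (w^3/3 + w*t/2) * (-(u t) * Φ w t 1) := by
        funext w; rw [hY w t]; simp
      rw [this]
      exact hexp.mul (hD1.const_mul (-(u t)))
    have hY1 : HasDerivAt (fun w => Y w t 1)
        (Complex.exp (l^3/3 + l*t/2) * (l^2 + t/2) * (2 * Φ l t 0)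
          + Complex.exp (l^3/3 + l*t/2) * (2 * d0)) l := by
      have : (fun w => Y w t 1) = fun w =>
          Complex.exp (w^3/3 + w*t/2) * (2 * Φ w t 0) := by
        funext w; rw [hY w t]; simp
      rw [this]
      exact hexp.mul (hD0.const_mul 2)
    funext i
    fin_cases i
    · show deriv (fun w => Y w t 0) l = _
      rw [hY0.deriv]
      simp [Matrix.mulVec, dotProduct, Fin.sum_univ_two, hY l t,
        Fin.mk_zero, Fin.mk_one]
      rw [hd1]; ring
    · show deriv (fun w => Y w t 1) l = _
      rw [hY1.deriv]
      simp [Matrix.mulVec, dotProduct, Fin.sum_univ_two, hY l t,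
        Fin.mk_zero, Fin.mk_one]
      rw [hd0]; field_simp [hu0 t]; ring
  · intro l t
    have T0 := congrFun (ht l t) 0
    have T1 := congrFun (ht l t) 1
    simp [Matrix.mulVec, dotProduct, Fin.sum_univ_three] at T0 T1
    set e0 := deriv (fun s => Φ l s 0) t with he0def
    set e1 := deriv (fun s => Φ l s 1) t with he1def
    have hg : HasDerivAt (fun s : ℂ => l^3/3 + l*s/2) (l/2) t := by
      have h1 : HasDerivAt (fun s : ℂ => l^3/3 + l*s/2) (0 + (l*1)/2) t :=
        (hasDerivAt_const t (l^3/3)).add (((hasDerivAt_id t).const_mul l).div_const 2)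
      convert h1 using 1; ring
    have hexp : HasDerivAt (fun s : ℂ => Complex.exp (l^3/3 + l*s/2))
        (Complex.exp (l^3/3 + l*t/2) * (l/2)) t := hg.cexp
    have hE1 : HasDerivAt (fun s => Φ l s 1) e1 t := ((hΦt l 1) t).hasDerivAt
    have hE0 : HasDerivAt (fun s => Φ l s 0) e0 t := ((hΦt l 0) t).hasDerivAt
    have hU : HasDerivAt u (-(y t) * u t) t := by
      have := (hu t).hasDerivAt; rwa [hu' t] at this
    have hY0 : HasDerivAt (fun s => Y l s 0)
        (Complex.exp (l^3/3 + l*t/2) * (l/2) * (-(u t) * Φ l t 1)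
          + Complex.exp (l^3/3 + l*t/2) * (-(-(y t) * u t) * Φ l t 1 + -(u t) * e1)) t := by
      have : (fun s => Y l s 0) = fun s =>
          Complex.exp (l^3/3 + l*s/2) * (-(u s) * Φ l s 1) := by
        funext s; rw [hY l s]; simp
      rw [this]
      exact hexp.mul (hU.neg.mul hE1)
    have hY1 : HasDerivAt (fun s => Y l s 1)
        (Complex.exp (l^3/3 + l*t/2) * (l/2) * (2 * Φ l t 0)
          + Complex.exp (l^3/3 + l*t/2) * (2 * e0)) t := by
      have : (fun s => Y l s 1) = fun s =>
          Complex.exp (l^3/3 + l*s/2) * (2 * Φ l s 0) := by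
        funext s; rw [hY l s]; simp
      rw [this]
      exact hexp.mul (hE0.const_mul 2)
    funext i
    fin_cases i
    · show deriv (fun s => Y l s 0) t = _
      rw [hY0.deriv]
      simp [Matrix.mulVec, dotProduct, Fin.sum_univ_two, hY l t,
        Fin.mk_zero, Fin.mk_one]
      rw [T1]; ring
    · show deriv (fun s => Y l s 1) t = _
      rw [hY1.deriv]
      simp [Matrix.mulVec, dotProduct, Fin.sum_univ_two, hY l t,
        Fin.mk_zero, Fin.mk_one]
      rw [T0]; field_simp [hu0 t]; ring
end
end

section
/- Let κ₁, κ₂ ∈ ℂ and let y, z : ℂ → ℂ be holomorphic. Let Ψ = (Ψ₁,Ψ₂,Ψ₃) : (ℂ∖{0})×ℂ → ℂ³ be holomorphic and satisfy [[0,1,0],[0,0,1],[0,0,0]]·μ·∂Ψ/∂μ = [[μ−(z+2y²+t), −μy+κ₁, 0],[y, (μ+z)/2, κ₂],[−1, 0, μ]]·Ψ and ∂Ψ/∂t = [[0,0,−1],[0,0,0],[0,0,0]]·μ·∂Ψ/∂μ + [[0, z/2, κ₂],[−1, y, 0],[0, −1/2, −y]]·Ψ. Then Ψ₁(μ,t)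 = μ·Ψ₃(μ,t) for all (μ,t), and ψ := (Ψ₂, Ψ₃)ᵀ satisfies ∂ψ/∂μ = (μ·[[0,1],[0,0]] + [[−y, −(z+2y²+t)],[1/2, y]] + (1/μ)·[[κ₁, 0],[z/2, κ₂]])·ψ and ∂ψ/∂t = −(μ·[[0,1],[0,0]] + [[−y, 0],[1/2, y]])·ψ. -/
open Matrix Complex

noncomputable section

/-- If `Ψ` is a holomorphic solution of the degenerate pair `dJKT₂³` on
`(ℂ∖{0})×ℂ`, then `Ψ₁ = μΨ₃`, and `ψ := (Ψ₂,Ψ₃)ᵀ` solves the corresponding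
`2×2` system (gauge equivalent to the Harnad–Tracy–Widom pair). -/
theorem stmt_12 (κ₁ κ₂ : ℂ) (y z : ℂ → ℂ)
    (hy : Differentiable ℂ y) (hz : Differentiable ℂ z)
    (Ψ : ℂ → ℂ → Fin 3 → ℂ)
    (hΨ : ∀ i, DifferentiableOn ℂ (fun p : ℂ × ℂ => Ψ p.1 p.2 i) {p | p.1 ≠ 0})
    (hμeq : ∀ μ : ℂ, μ ≠ 0 → ∀ t : ℂ,
      (!![0,1,0; 0,0,1; 0,0,0] : Matrix (Fin 3) (Fin 3) ℂ).mulVec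
          (fun i => μ * deriv (fun m => Ψ m t i) μ) =
        (!![μ - (z t + 2*(y t)^2 + t), -μ*(y t) + κ₁, 0;
            y t, (μ + z t)/2, κ₂;
            -1, 0, μ] : Matrix (Fin 3) (Fin 3) ℂ).mulVec (Ψ μ t))
    (hteq : ∀ μ : ℂ, μ ≠ 0 → ∀ t : ℂ,
      (fun i => deriv (fun s => Ψ μ s i) t) =
        (!![0,0,-1; 0,0,0; 0,0,0] : Matrix (Fin 3) (Fin 3) ℂ).mulVec
            (fun i => μ * deriv (fun m => Ψ m t i) μ) +
          (!![0, (z t)/2, κ₂; -1, y t, 0; 0, -1/2, -y t] :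
            Matrix (Fin 3) (Fin 3) ℂ).mulVec (Ψ μ t)) :
    (∀ μ : ℂ, μ ≠ 0 → ∀ t : ℂ, Ψ μ t 0 = μ * Ψ μ t 2) ∧
    (∀ ψ : ℂ → ℂ → Fin 2 → ℂ,
      (∀ μ t : ℂ, ψ μ t = ![Ψ μ t 1, Ψ μ t 2]) →
      (∀ μ : ℂ, μ ≠ 0 → ∀ t : ℂ,
        (fun i => deriv (fun m => ψ m t i) μ) =
          (μ • (!![0,1; 0,0] : Matrix (Fin 2) (Fin 2) ℂ) +
            !![-y t, -(z t + 2*(y t)^2 + t); 1/2, y t] +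
            (1/μ) • !![κ₁, 0; (z t)/2, κ₂]).mulVec (ψ μ t)) ∧
      (∀ μ : ℂ, μ ≠ 0 → ∀ t : ℂ,
        (fun i => deriv (fun s => ψ μ s i) t) =
          (-(μ • (!![0,1; 0,0] : Matrix (Fin 2) (Fin 2) ℂ) +
            !![-y t, 0; 1/2, y t])).mulVec (ψ μ t))) := by

  have key : ∀ μ : ℂ, μ ≠ 0 → ∀ t : ℂ, Ψ μ t 0 = μ * Ψ μ t 2 := by
    intro μ hμ t
    have h := congrFun (hμeq μ hμ t) 2
    simp [Matrix.mulVec, dotProduct, Fin.sum_univ_three] at h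
    linear_combination h
  refine ⟨key, ?_⟩
  intro ψ hψ
  constructor
  · intro μ hμ t
    have h0 := congrFun (hμeq μ hμ t) 0
    have h1 := congrFun (hμeq μ hμ t) 1
    simp [Matrix.mulVec, dotProduct, Fin.sum_univ_three] at h0 h1
    funext i
    have e1 : (fun m => ψ m t 0) = fun m => Ψ m t 1 := funext fun m => by rw [hψ]; simp
    have e2 : (fun m => ψ m t 1) = fun m => Ψ m t 2 := funext fun m => by rw [hψ]; simp
    have hk := key μ hμ t
    fin_cases i
    · show deriv (fun m => ψ m t 0) μ = _
      rw [e1]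
      simp [Matrix.mulVec, dotProduct, Fin.sum_univ_two, hψ]
      field_simp
      linear_combination h0 + (μ - (z t + 2*(y t)^2 + t)) * hk
    · show deriv (fun m => ψ m t 1) μ = _
      rw [e2]
      simp [Matrix.mulVec, dotProduct, Fin.sum_univ_two, hψ]
      field_simp
      linear_combination 2*h1 + 2*(y t)*hk
  · intro μ hμ t
    have h1 := congrFun (hteq μ hμ t) 1
    have h2 := congrFun (hteq μ hμ t) 2
    simp [Matrix.mulVec, dotProduct, Fin.sum_univ_three] at h1 h2
    funext i
    have e1 : (fun s => ψ μ s 0) = fun s => Ψ μ s 1 := funext fun s => by rw [hψ]; simp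
    have e2 : (fun s => ψ μ s 1) = fun s => Ψ μ s 2 := funext fun s => by rw [hψ]; simp
    have hk := key μ hμ t
    fin_cases i
    · show deriv (fun s => ψ μ s 0) t = _
      rw [e1]
      simp [Matrix.mulVec, dotProduct, Fin.sum_univ_two, hψ]
      linear_combination h1 - hk
    · show deriv (fun s => ψ μ s 1) t = _
      rw [e2]
      simp [Matrix.mulVec, dotProduct, Fin.sum_univ_two, hψ]
      linear_combination h2
end
end

section
/- Let θ ∈ ℂ and let y, z : ℂ → ℂ be holomorphic. Let Φ = (Φ₁,Φ₂,Φ₃) : ℂ² → ℂ³ be holomorphic and satisfy the degenerate system [[1,0,0],[0,1,0],[0,0,0]]·∂Φ/∂λ = [[−(z+t), λz+yz+θ, 2λ],[2y, z, 2],[λ, 0, 1]]·Φ and ∂Φ/∂t = (1/2)·[[0, z, 2],[−2, 2y, 0],[0, −λz, −2λ]]·Φ. Then Φ₃(λ,t) = −λ·Φ₁(λ,t) for all (λ,t), and φ := (Φ₁, Φ₂)ᵀ satisfies ∂φ/∂λ = −(λ²·[[2,0],[0,0]] + λ·[[0,−z],[2,0]] + [[z+t, −yz−θ],[−2y, −z]])·φ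 and ∂φ/∂t = −(1/2)·(λ·[[2,0],[0,0]] + [[0,−z],[2,−2y]])·φ. Moreover, if u : ℂ → ℂ is holomorphic with u ≠ 0 and u′ = −yu, then Y := exp(λ³/3 + λt/2)·(−u·Φ₂, 2·Φ₁)ᵀ satisfies the Jimbo–Miwa pair JM₂ with parameter θ. -/
open Matrix Complex

noncomputable section

/-- If `Φ` is a holomorphic solution of the degenerate pair `dJKT₂¹`, then
`Φ₃ = −λΦ₁`, the vector `φ := (Φ₁,Φ₂)ᵀ` solves the corresponding `2×2` system,
and, for any nowhere-vanishing `u` with `u' = −yu`, the vector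
`Y := exp(λ³/3 + λt/2)·(−uΦ₂, 2Φ₁)ᵀ` solves the Jimbo–Miwa pair `JM₂` with
parameter `θ`. -/
theorem stmt_14 (θ : ℂ) (y z : ℂ → ℂ)
    (hy : Differentiable ℂ y) (hz : Differentiable ℂ z)
    (Φ : ℂ → ℂ → Fin 3 → ℂ)
    (hΦ : ∀ i, Differentiable ℂ (fun p : ℂ × ℂ => Φ p.1 p.2 i))
    (hlam : ∀ l t : ℂ,
      (!![1,0,0; 0,1,0; 0,0,0] : Matrix (Fin 3) (Fin 3) ℂ).mulVec
          (fun i => deriv (fun w => Φ w t i) l) =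
        (!![-(z t + t), l*(z t) + (y t)*(z t) + θ, 2*l;
            2*y t, z t, 2;
            l, 0, 1] : Matrix (Fin 3) (Fin 3) ℂ).mulVec (Φ l t))
    (ht : ∀ l t : ℂ,
      (fun i => deriv (fun s => Φ l s i) t) =
        ((1/2 : ℂ) • (!![0, z t, 2; -2, 2*y t, 0; 0, -l*(z t), -2*l] :
          Matrix (Fin 3) (Fin 3) ℂ)).mulVec (Φ l t)) :
    (∀ l t : ℂ, Φ l t 2 = -l * Φ l t 0) ∧
    (∀ φ : ℂ → ℂ → Fin 2 → ℂ,
      (∀ l t : ℂ, φ l t = ![Φ l t 0, Φ l t 1]) →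
      (∀ l t : ℂ,
        (fun i => deriv (fun w => φ w t i) l) =
          (-(l^2 • (!![2,0; 0,0] : Matrix (Fin 2) (Fin 2) ℂ) +
              l • !![0, -z t; 2, 0] +
              !![z t + t, -(y t)*(z t) - θ; -2*y t, -z t])).mulVec (φ l t)) ∧
      (∀ l t : ℂ,
        (fun i => deriv (fun s => φ l s i) t) =
          ((-(1/2) : ℂ) • (l • (!![2,0; 0,0] : Matrix (Fin 2) (Fin 2) ℂ) +
            !![0, -z t; 2, -2*y t])).mulVec (φ l t))) ∧
    (∀ u : ℂ → ℂ, Differentiable ℂ u → (∀ t : ℂ, u t ≠ 0) →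
      (∀ t : ℂ, deriv u t = -(y t) * u t) →
      ∀ Y : ℂ → ℂ → Fin 2 → ℂ,
        (∀ l t : ℂ,
          Y l t = Complex.exp (l^3/3 + l*t/2) • ![-(u t) * Φ l t 1, 2 * Φ l t 0]) →
        (∀ l t : ℂ,
          (fun i => deriv (fun w => Y w t i) l) =
            (l^2 • (!![1,0; 0,-1] : Matrix (Fin 2) (Fin 2) ℂ) +
              l • !![0, u t; -2*z t/u t, 0] +
              !![z t + t/2, -(u t)*(y t);
                -2*((y t)*(z t) + θ)/u t, -(z t) - t/2]).mulVec (Y l t)) ∧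
        (∀ l t : ℂ,
          (fun i => deriv (fun s => Y l s i) t) =
            ((l/2) • (!![1,0; 0,-1] : Matrix (Fin 2) (Fin 2) ℂ) +
              (1/2 : ℂ) • !![0, u t; -2*z t/u t, 0]).mulVec (Y l t))) := by
  -- Key: Φ₂ = -λ Φ₀
  have key2 : ∀ l t : ℂ, Φ l t 2 = -l * Φ l t 0 := by
    intro l t
    have h := congrFun (hlam l t) 2
    simp [Matrix.mulVec, dotProduct, Fin.sum_univ_succ] at h
    linear_combination -h
  -- scalar derivative equations
  have dl0 : ∀ l t : ℂ, deriv (fun w => Φ w t 0) l =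
      (-2*l^2 - (z t + t)) * Φ l t 0 + (l * z t + y t * z t + θ) * Φ l t 1 := by
    intro l t
    have h := congrFun (hlam l t) 0
    simp [Matrix.mulVec, dotProduct, Fin.sum_univ_succ, key2] at h
    linear_combination h
  have dl1 : ∀ l t : ℂ, deriv (fun w => Φ w t 1) l =
      (2 * y t - 2*l) * Φ l t 0 + z t * Φ l t 1 := by
    intro l t
    have h := congrFun (hlam l t) 1
    simp [Matrix.mulVec, dotProduct, Fin.sum_univ_succ, key2] at h
    linear_combination h
  have dt0 : ∀ l t : ℂ, deriv (fun s => Φ l s 0) t =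
      -l * Φ l t 0 + (z t / 2) * Φ l t 1 := by
    intro l t
    have h := congrFun (ht l t) 0
    simp [Matrix.mulVec, dotProduct, Fin.sum_univ_succ, key2, Matrix.smul_apply] at h
    linear_combination h
  have dt1 : ∀ l t : ℂ, deriv (fun s => Φ l s 1) t =
      -Φ l t 0 + y t * Φ l t 1 := by
    intro l t
    have h := congrFun (ht l t) 1
    simp [Matrix.mulVec, dotProduct, Fin.sum_univ_succ, key2, Matrix.smul_apply] at h
    linear_combination h
  have hΦl : ∀ (t : ℂ) (i : Fin 3), Differentiable ℂ (fun w => Φ w t i) :=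
    fun t i => (hΦ i).comp (differentiable_id.prodMk (differentiable_const t))
  have hΦt : ∀ (l : ℂ) (i : Fin 3), Differentiable ℂ (fun s => Φ l s i) :=
    fun l i => (hΦ i).comp ((differentiable_const l).prodMk differentiable_id)
  refine ⟨key2, ?_, ?_⟩
  · intro φ hφ
    have el0 : ∀ t : ℂ, (fun w : ℂ => φ w t 0) = (fun w => Φ w t 0) :=
      fun t => funext fun w => by rw [hφ]; rfl
    have el1 : ∀ t : ℂ, (fun w : ℂ => φ w t 1) = (fun w => Φ w t 1) :=
      fun t => funext fun w => by rw [hφ]; rfl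
    have et0 : ∀ l : ℂ, (fun s : ℂ => φ l s 0) = (fun s => Φ l s 0) :=
      fun l => funext fun s => by rw [hφ]; rfl
    have et1 : ∀ l : ℂ, (fun s : ℂ => φ l s 1) = (fun s => Φ l s 1) :=
      fun l => funext fun s => by rw [hφ]; rfl
    constructor
    · intro l t
      funext i
      fin_cases i
      · show deriv (fun w => φ w t 0) l = _
        rw [el0 t]
        simp [Matrix.mulVec, dotProduct, Fin.sum_univ_succ, hφ, dl0]
        ring
      · show deriv (fun w => φ w t 1) l = _
        rw [el1 t]
        simp [Matrix.mulVec, dotProduct, Fin.sum_univ_succ, hφ, dl1]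
        ring
    · intro l t
      funext i
      fin_cases i
      · show deriv (fun s => φ l s 0) t = _
        rw [et0 l]
        simp [Matrix.mulVec, dotProduct, Fin.sum_univ_succ, hφ, dt0]
        ring
      · show deriv (fun s => φ l s 1) t = _
        rw [et1 l]
        simp [Matrix.mulVec, dotProduct, Fin.sum_univ_succ, hφ, dt1]
        ring
  · intro u hu hune hu' Y hY
    -- derivative of the exponential factor in λ
    have hEl : ∀ l t : ℂ, HasDerivAt (fun w : ℂ => Complex.exp (w^3/3 + w*t/2))
        ((l^2 + t/2) * Complex.exp (l^3/3 + l*t/2)) l := by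
      intro l t
      have h1 : HasDerivAt (fun w : ℂ => w^3/3 + w*t/2) (l^2 + t/2) l := by
        have := ((hasDerivAt_pow 3 l).div_const 3).add
          (((hasDerivAt_id l).mul_const t).div_const 2)
        exact this.congr_deriv (by push_cast; ring)
      simpa [mul_comm] using h1.cexp
    have hEt : ∀ l t : ℂ, HasDerivAt (fun s : ℂ => Complex.exp (l^3/3 + l*s/2))
        ((l/2) * Complex.exp (l^3/3 + l*t/2)) t := by
      intro l t
      have h1 : HasDerivAt (fun s : ℂ => l^3/3 + l*s/2) (l/2) t := by
        have := (hasDerivAt_const t (l^3/3)).add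
          (((hasDerivAt_id t).const_mul l).div_const 2)
        exact this.congr_deriv (by ring)
      simpa [mul_comm] using h1.cexp
    have hY0 : ∀ l t : ℂ, Y l t 0 = Complex.exp (l^3/3 + l*t/2) * (-(u t) * Φ l t 1) := by
      intro l t; rw [hY]; simp
    have hY1 : ∀ l t : ℂ, Y l t 1 = Complex.exp (l^3/3 + l*t/2) * (2 * Φ l t 0) := by
      intro l t; rw [hY]; simp
    constructor
    · intro l t
      funext i
      have E := Complex.exp (l^3/3 + l*t/2)
      fin_cases i
      · show deriv (fun w => Y w t 0) l = _
        have hfun : (fun w => Y w t 0) =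
            fun w => Complex.exp (w^3/3 + w*t/2) * (-(u t) * Φ w t 1) := by
          funext w; exact hY0 w t
        have hD : HasDerivAt (fun w => Y w t 0)
            ((l^2 + t/2) * Complex.exp (l^3/3 + l*t/2) * (-(u t) * Φ l t 1) +
             Complex.exp (l^3/3 + l*t/2) * (-(u t) * deriv (fun w => Φ w t 1) l)) l := by
          rw [hfun]
          exact (hEl l t).mul (((hΦl t 1) l).hasDerivAt.const_mul (-(u t)))
        rw [hD.deriv]
        simp [Matrix.mulVec, dotProduct, Fin.sum_univ_succ, hY0, hY1, dl1]
        ring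
      · show deriv (fun w => Y w t 1) l = _
        have hfun : (fun w => Y w t 1) =
            fun w => Complex.exp (w^3/3 + w*t/2) * (2 * Φ w t 0) := by
          funext w; exact hY1 w t
        have hD : HasDerivAt (fun w => Y w t 1)
            ((l^2 + t/2) * Complex.exp (l^3/3 + l*t/2) * (2 * Φ l t 0) +
             Complex.exp (l^3/3 + l*t/2) * (2 * deriv (fun w => Φ w t 0) l)) l := by
          rw [hfun]
          exact (hEl l t).mul (((hΦl t 0) l).hasDerivAt.const_mul 2)
        rw [hD.deriv]
        have hut := hune t
        simp [Matrix.mulVec, dotProduct, Fin.sum_univ_succ, hY0, hY1, dl0]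
        field_simp
        ring
    · intro l t
      funext i
      fin_cases i
      · show deriv (fun s => Y l s 0) t = _
        have hfun : (fun s => Y l s 0) =
            fun s => Complex.exp (l^3/3 + l*s/2) * (-(u s) * Φ l s 1) := by
          funext s; exact hY0 l s
        have hD : HasDerivAt (fun s => Y l s 0)
            ((l/2) * Complex.exp (l^3/3 + l*t/2) * (-(u t) * Φ l t 1) +
             Complex.exp (l^3/3 + l*t/2) *
               ((-(deriv u t)) * Φ l t 1 + (-(u t)) * deriv (fun s => Φ l s 1) t)) t := by
          rw [hfun]
          exact (hEt l t).mul (((hu t).hasDerivAt.neg).mul ((hΦt l 1) t).hasDerivAt)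
        rw [hD.deriv]
        simp [Matrix.mulVec, dotProduct, Fin.sum_univ_succ, hY0, hY1, dt1, hu']
        ring
      · show deriv (fun s => Y l s 1) t = _
        have hfun : (fun s => Y l s 1) =
            fun s => Complex.exp (l^3/3 + l*s/2) * (2 * Φ l s 0) := by
          funext s; exact hY1 l s
        have hD : HasDerivAt (fun s => Y l s 1)
            ((l/2) * Complex.exp (l^3/3 + l*t/2) * (2 * Φ l t 0) +
             Complex.exp (l^3/3 + l*t/2) * (2 * deriv (fun s => Φ l s 0) t)) t := by
          rw [hfun]
          exact (hEt l t).mul (((hΦt l 0) t).hasDerivAt.const_mul 2)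
        rw [hD.deriv]
        have hut := hune t
        simp [Matrix.mulVec, dotProduct, Fin.sum_univ_succ, hY0, hY1, dt0]
        field_simp
        ring
end
end

section
/- Let θ ∈ ℂ and let y, z : ℂ → ℂ be holomorphic with z(t) ≠ 0, y′ = y² + z + t/2, and z′ = −2yz − θ for all t. Let χ = (χ₁,χ₂,χ₃) : (ℂ∖{0})×ℂ → ℂ³ be holomorphic and satisfy [[1,0,0],[0,0,0],[0,0,1]]·∂χ/∂μ = [[−(y+θ/z), −(y+θ/z), −μ+z+t],[−μ−z, −μ, −2yz],[0, 1/2, 0]]·χ and ∂χ/∂t = [[0, 0, μ−2z−t],[−(y+θ/z), −(y+θ/z), −μ+z+t],[1/2, 0, 0]]·χ. Then Ψ := [[0,0,1],[1/z, 1/z, 0],[0, −1/2, 0]]·χ satisfies the degenerate system [[0,z,2],[0,0,0],[1,0,0]]·∂Ψ/∂μ = [[−μ+z+t, −(yz+θ), 0],[−2y, −μ−z, −2],[0, 0, −1]]·Ψ and ∂Ψ/∂t = (1/2)·[[0, z, 2],[−2, 2y, 0],[μ−(z+t), yz+θ, 0]]·Ψ on (ℂ∖{0})×ℂ. -/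
open Matrix Complex

noncomputable section

set_option maxHeartbeats 1000000 in
/-- The gauge transformation `Ψ := [[0,0,1],[1/z,1/z,0],[0,−1/2,0]]·χ` maps a
holomorphic solution `χ` of system (5.5) of the paper to a solution `Ψ` of the
degenerate pair `dJKT₂²` with parameter `θ` on `(ℂ∖{0})×ℂ`. -/
theorem stmt_15 (θ : ℂ) (y z : ℂ → ℂ)
    (hy : Differentiable ℂ y) (hz : Differentiable ℂ z)
    (hz0 : ∀ t : ℂ, z t ≠ 0)
    (hy' : ∀ t : ℂ, deriv y t = (y t)^2 + z t + t/2)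
    (hz' : ∀ t : ℂ, deriv z t = -2*(y t)*(z t) - θ)
    (χ : ℂ → ℂ → Fin 3 → ℂ)
    (hχ : ∀ i, DifferentiableOn ℂ (fun p : ℂ × ℂ => χ p.1 p.2 i) {p | p.1 ≠ 0})
    (hμeq : ∀ μ : ℂ, μ ≠ 0 → ∀ t : ℂ,
      (!![1,0,0; 0,0,0; 0,0,1] : Matrix (Fin 3) (Fin 3) ℂ).mulVec
          (fun i => deriv (fun m => χ m t i) μ) =
        (!![-(y t + θ/z t), -(y t + θ/z t), -μ + z t + t;
            -μ - z t, -μ, -2*(y t)*(z t);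
            0, 1/2, 0] : Matrix (Fin 3) (Fin 3) ℂ).mulVec (χ μ t))
    (hteq : ∀ μ : ℂ, μ ≠ 0 → ∀ t : ℂ,
      (fun i => deriv (fun s => χ μ s i) t) =
        (!![0, 0, μ - 2*z t - t;
            -(y t + θ/z t), -(y t + θ/z t), -μ + z t + t;
            1/2, 0, 0] : Matrix (Fin 3) (Fin 3) ℂ).mulVec (χ μ t))
    (Ψ : ℂ → ℂ → Fin 3 → ℂ)
    (hΨ : ∀ μ t : ℂ,
      Ψ μ t = (!![0, 0, 1; (z t)⁻¹, (z t)⁻¹, 0; 0, -1/2, 0] :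
        Matrix (Fin 3) (Fin 3) ℂ).mulVec (χ μ t)) :
    ∀ μ : ℂ, μ ≠ 0 → ∀ t : ℂ,
      ((!![0, z t, 2; 0,0,0; 1,0,0] : Matrix (Fin 3) (Fin 3) ℂ).mulVec
          (fun i => deriv (fun m => Ψ m t i) μ) =
        (!![-μ + z t + t, -((y t)*(z t) + θ), 0;
            -2*y t, -μ - z t, -2;
            0, 0, -1] : Matrix (Fin 3) (Fin 3) ℂ).mulVec (Ψ μ t)) ∧
      ((fun i => deriv (fun s => Ψ μ s i) t) =
        ((1/2 : ℂ) • (!![0, z t, 2;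
            -2, 2*y t, 0;
            μ - (z t + t), (y t)*(z t) + θ, 0] :
          Matrix (Fin 3) (Fin 3) ℂ)).mulVec (Ψ μ t)) := by
  intro mu hmu t
  have hopen : IsOpen {p : ℂ × ℂ | p.1 ≠ 0} := by
    have : {p : ℂ × ℂ | p.1 ≠ 0} = Prod.fst ⁻¹' ({0}ᶜ) := rfl
    rw [this]
    exact isOpen_compl_singleton.preimage continuous_fst
  have hdm : ∀ i, DifferentiableAt ℂ (fun m => χ m t i) mu := by
    intro i
    have h := (hχ i).differentiableAt (x := (mu, t)) (hopen.mem_nhds hmu)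
    have := h.comp (f := fun m : ℂ => (m, t)) mu ((differentiableAt_id).prodMk (differentiableAt_const t))
    simpa [Function.comp_def] using this
  have hdt : ∀ i, DifferentiableAt ℂ (fun s => χ mu s i) t := by
    intro i
    have h := (hχ i).differentiableAt (x := (mu, t)) (hopen.mem_nhds hmu)
    have := h.comp (f := fun s : ℂ => (mu, s)) t ((differentiableAt_const mu).prodMk differentiableAt_id)
    simpa [Function.comp_def] using this
  have e0 := congrFun (hμeq mu hmu t) 0
  have e1 := congrFun (hμeq mu hmu t) 1
  have e2 := congrFun (hμeq mu hmu t) 2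
  simp [Matrix.mulVec, dotProduct, Fin.sum_univ_three] at e0 e1 e2
  have ht0 := congrFun (hteq mu hmu t) 0
  have ht1 := congrFun (hteq mu hmu t) 1
  have ht2 := congrFun (hteq mu hmu t) 2
  simp [Matrix.mulVec, dotProduct, Fin.sum_univ_three] at ht0 ht1 ht2
  have p0 : ∀ m s : ℂ, Ψ m s 0 = χ m s 2 := by
    intro m s
    simp [hΨ, Matrix.mulVec, dotProduct, Fin.sum_univ_three]
  have p1 : ∀ m s : ℂ, Ψ m s 1 = (z s)⁻¹ * χ m s 0 + (z s)⁻¹ * χ m s 1 := by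
    intro m s
    simp [hΨ, Matrix.mulVec, dotProduct, Fin.sum_univ_three]
  have p2 : ∀ m s : ℂ, Ψ m s 2 = -(1/2) * χ m s 1 := by
    intro m s
    simp [hΨ, Matrix.mulVec, dotProduct, Fin.sum_univ_three]
    ring
  have dm0 : deriv (fun m => Ψ m t 0) mu = deriv (fun m => χ m t 2) mu := by
    congr 1; funext m; exact p0 m t
  have dm1 : deriv (fun m => Ψ m t 1) mu
      = (z t)⁻¹ * deriv (fun m => χ m t 0) mu + (z t)⁻¹ * deriv (fun m => χ m t 1) mu := by
    have hfun : (fun m => Ψ m t 1) = fun m => (z t)⁻¹ * χ m t 0 + (z t)⁻¹ * χ m t 1 :=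
      funext fun m => p1 m t
    rw [hfun, deriv_fun_add ((hdm 0).const_mul _) ((hdm 1).const_mul _),
      deriv_const_mul _ (hdm 0), deriv_const_mul _ (hdm 1)]
  have dm2 : deriv (fun m => Ψ m t 2) mu = -(1/2) * deriv (fun m => χ m t 1) mu := by
    have hfun : (fun m => Ψ m t 2) = fun m => -(1/2) * χ m t 1 := funext fun m => p2 m t
    rw [hfun, deriv_const_mul _ (hdm 1)]
  have hzinv : DifferentiableAt ℂ (fun s => (z s)⁻¹) t := (hz t).inv (hz0 t)
  have dzinv : deriv (fun s => (z s)⁻¹) t = -(deriv z t) / (z t)^2 :=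
    deriv_inv'' (hz t) (hz0 t)
  have dt0 : deriv (fun s => Ψ mu s 0) t = deriv (fun s => χ mu s 2) t := by
    congr 1; funext s; exact p0 mu s
  have dt1 : deriv (fun s => Ψ mu s 1) t
      = (deriv (fun s => (z s)⁻¹) t * χ mu t 0 + (z t)⁻¹ * deriv (fun s => χ mu s 0) t)
        + (deriv (fun s => (z s)⁻¹) t * χ mu t 1 + (z t)⁻¹ * deriv (fun s => χ mu s 1) t) := by
    have hfun : (fun s => Ψ mu s 1) = fun s => (z s)⁻¹ * χ mu s 0 + (z s)⁻¹ * χ mu s 1 :=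
      funext fun s => p1 mu s
    rw [hfun, deriv_fun_add (hzinv.fun_mul (hdt 0)) (hzinv.fun_mul (hdt 1)),
      deriv_fun_mul hzinv (hdt 0), deriv_fun_mul hzinv (hdt 1)]
  have dt2 : deriv (fun s => Ψ mu s 2) t = -(1/2) * deriv (fun s => χ mu s 1) t := by
    have hfun : (fun s => Ψ mu s 2) = fun s => -(1/2) * χ mu s 1 := funext fun s => p2 mu s
    rw [hfun, deriv_const_mul _ (hdt 1)]
  have hz0t := hz0 t
  have hzd := hz' t
  constructor
  · funext i
    have pt0 := p0 mu t
    have pt1 := p1 mu t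
    have pt2 := p2 mu t
    fin_cases i
    · simp only [Matrix.mulVec, dotProduct, Fin.sum_univ_three]
      norm_num [dm0, dm1, dm2, pt0, pt1, pt2, e0, e2, Matrix.cons_val_two, Matrix.tail_cons, Matrix.head_cons]
      field_simp
      try ring
    · simp only [Matrix.mulVec, dotProduct, Fin.sum_univ_three]
      norm_num [dm0, dm1, dm2, pt0, pt1, pt2, Matrix.cons_val_two, Matrix.tail_cons, Matrix.head_cons]
      field_simp
      linear_combination e1
    · simp only [Matrix.mulVec, dotProduct, Fin.sum_univ_three]
      norm_num [dm0, dm1, dm2, pt0, pt1, pt2, e2, Matrix.cons_val_two, Matrix.tail_cons, Matrix.head_cons]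
      try ring
  · rw [Matrix.smul_mulVec]
    funext i
    have pt0 := p0 mu t
    have pt1 := p1 mu t
    have pt2 := p2 mu t
    fin_cases i
    · simp only [Matrix.mulVec, dotProduct, Fin.sum_univ_three, Pi.smul_apply,
        smul_eq_mul]
      norm_num [dt0, dt1, dt2, dzinv, ht0, ht1, ht2, hzd, pt0, pt1, pt2, Matrix.cons_val_two, Matrix.tail_cons, Matrix.head_cons]
      field_simp
      try ring
    · simp only [Matrix.mulVec, dotProduct, Fin.sum_univ_three, Pi.smul_apply,
        smul_eq_mul]
      norm_num [dt0, dt1, dt2, dzinv, ht0, ht1, ht2, hzd, pt0, pt1, pt2, Matrix.cons_val_two, Matrix.tail_cons, Matrix.head_cons]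
      field_simp
      try ring
    · show deriv (fun s => Ψ mu s 2) t = _
      simp only [Matrix.mulVec, dotProduct, Fin.sum_univ_three, Pi.smul_apply,
        smul_eq_mul]
      norm_num [dt0, dt1, dt2, dzinv, ht0, ht1, ht2, hzd, pt0, pt1, pt2, Matrix.cons_val_two, Matrix.tail_cons, Matrix.head_cons]
      field_simp
      try ring
end
end

section
/- Let θ ∈ ℂ and let y, z : ℂ → ℂ be holomorphic with z(t) ≠ 0 for all t. Let χ = (χ₁,χ₂,χ₃) : (ℂ∖{0})×ℂ → ℂ³ be holomorphic and satisfy [[1,0,0],[0,0,0],[0,0,1]]·∂χ/∂μ = [[−(y+θ/z), −(y+θ/z), −μ+z+t],[−μ−z, −μ, −2yz],[0, 1/2, 0]]·χ and ∂χ/∂t = [[0, 0, μ−2z−t],[−(y+θ/z), −(y+θ/z), −μ+z+t],[1/2, 0, 0]]·χ. Then χ₂ = −χ₁ − (z·χ₁ + 2yz·χ₃)/μ for all (μ,t), and ψ := (χ₁, χ₃)ᵀ satisfies ∂ψ/∂μ = (μ·[[0,−1],[0,0]] + [[0, z+t],[−1/2, 0]] + (1/μ)·[[yz+θ, 2yz(y+θ/z)],[−z/2,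 −yz]])·ψ and ∂ψ/∂t = (μ·[[0,1],[0,0]] + [[0, −2z−t],[1/2, 0]])·ψ. -/
open Matrix Complex

noncomputable section

/-- If `χ` is a holomorphic solution of system (5.5) of the paper on `(ℂ∖{0})×ℂ`,
then `χ₂ = −χ₁ − (zχ₁ + 2yzχ₃)/μ`, and `ψ := (χ₁,χ₃)ᵀ` solves the corresponding
`2×2` system. -/
theorem stmt_16 (θ : ℂ) (y z : ℂ → ℂ)
    (hy : Differentiable ℂ y) (hz : Differentiable ℂ z)
    (hz0 : ∀ t : ℂ, z t ≠ 0)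
    (χ : ℂ → ℂ → Fin 3 → ℂ)
    (hχ : ∀ i, DifferentiableOn ℂ (fun p : ℂ × ℂ => χ p.1 p.2 i) {p | p.1 ≠ 0})
    (hμeq : ∀ μ : ℂ, μ ≠ 0 → ∀ t : ℂ,
      (!![1,0,0; 0,0,0; 0,0,1] : Matrix (Fin 3) (Fin 3) ℂ).mulVec
          (fun i => deriv (fun m => χ m t i) μ) =
        (!![-(y t + θ/z t), -(y t + θ/z t), -μ + z t + t;
            -μ - z t, -μ, -2*(y t)*(z t);
            0, 1/2, 0] : Matrix (Fin 3) (Fin 3) ℂ).mulVec (χ μ t))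
    (hteq : ∀ μ : ℂ, μ ≠ 0 → ∀ t : ℂ,
      (fun i => deriv (fun s => χ μ s i) t) =
        (!![0, 0, μ - 2*z t - t;
            -(y t + θ/z t), -(y t + θ/z t), -μ + z t + t;
            1/2, 0, 0] : Matrix (Fin 3) (Fin 3) ℂ).mulVec (χ μ t)) :
    (∀ μ : ℂ, μ ≠ 0 → ∀ t : ℂ,
      χ μ t 1 = -χ μ t 0 - (z t * χ μ t 0 + 2*(y t)*(z t) * χ μ t 2)/μ) ∧
    (∀ ψ : ℂ → ℂ → Fin 2 → ℂ,
      (∀ μ t : ℂ, ψ μ t = ![χ μ t 0, χ μ t 2]) →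
      (∀ μ : ℂ, μ ≠ 0 → ∀ t : ℂ,
        (fun i => deriv (fun m => ψ m t i) μ) =
          (μ • (!![0,-1; 0,0] : Matrix (Fin 2) (Fin 2) ℂ) +
            !![0, z t + t; -1/2, 0] +
            (1/μ) • !![(y t)*(z t) + θ, 2*(y t)*(z t)*(y t + θ/z t);
              -(z t)/2, -(y t)*(z t)]).mulVec (ψ μ t)) ∧
      (∀ μ : ℂ, μ ≠ 0 → ∀ t : ℂ,
        (fun i => deriv (fun s => ψ μ s i) t) =
          (μ • (!![0,1; 0,0] : Matrix (Fin 2) (Fin 2) ℂ) +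
            !![0, -2*z t - t; 1/2, 0]).mulVec (ψ μ t))) := by

  -- key algebraic relation for χ₁
  have key : ∀ μ : ℂ, μ ≠ 0 → ∀ t : ℂ,
      χ μ t 1 = -χ μ t 0 - (z t * χ μ t 0 + 2*(y t)*(z t) * χ μ t 2)/μ := by
    intro μ hμ t
    have h1 := congrFun (hμeq μ hμ t) 1
    simp [Matrix.mulVec, dotProduct, Fin.sum_univ_three] at h1
    field_simp
    linear_combination h1
  refine ⟨key, ?_⟩
  intro ψ hψ
  constructor
  · intro μ hμ t
    have e0 : (fun m => ψ m t 0) = fun m => χ m t 0 := by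
      funext m; rw [hψ]; simp
    have e1 : (fun m => ψ m t 1) = fun m => χ m t 2 := by
      funext m; rw [hψ]; simp
    have h0 := congrFun (hμeq μ hμ t) 0
    have h2 := congrFun (hμeq μ hμ t) 2
    simp [Matrix.mulVec, dotProduct, Fin.sum_univ_three] at h0 h2
    have hk := key μ hμ t
    funext i
    fin_cases i
    · simp only [e0, hψ, Matrix.mulVec, dotProduct, Fin.sum_univ_two]
      simp
      rw [h0, hk]
      field_simp [hz0 t]
      ring
    · simp only [e1, hψ, Matrix.mulVec, dotProduct, Fin.sum_univ_two]
      simp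
      rw [h2, hk]
      field_simp [hz0 t]
      try ring
  · intro μ hμ t
    have e0 : (fun s => ψ μ s 0) = fun s => χ μ s 0 := by
      funext s; rw [hψ]; simp
    have e1 : (fun s => ψ μ s 1) = fun s => χ μ s 2 := by
      funext s; rw [hψ]; simp
    have h0 := congrFun (hteq μ hμ t) 0
    have h2 := congrFun (hteq μ hμ t) 2
    simp [Matrix.mulVec, dotProduct, Fin.sum_univ_three] at h0 h2
    funext i
    fin_cases i
    · simp only [e0, hψ, Matrix.mulVec, dotProduct, Fin.sum_univ_two]
      simp
      rw [h0]; try ring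
    · simp only [e1, hψ, Matrix.mulVec, dotProduct, Fin.sum_univ_two]
      simp
      rw [h2]; try ring
end
end

section
/- Let θ ∈ ℂ and let y, z : ℂ → ℂ be holomorphic with y′ = y² + z + t/2 and z′ = −2yz − θ for all t. Let D ⊆ ℂ∖{0} be open and h : D → ℂ holomorphic with h(μ) ≠ 0 and μ·h′(μ) = (θ/2)·h(μ) on D. Let ψ : D×ℂ → ℂ² be holomorphic and satisfy ∂ψ/∂μ = (μ·[[0,−1],[0,0]] + [[0, z+t],[−1/2, 0]] + (1/μ)·[[yz+θ, 2yz(y+θ/z)],[−z/2, −yz]])·ψ and ∂ψ/∂t = (μ·[[0,1],[0,0]] + [[0, −2z−t],[1/2, 0]])·ψ, where additionally z(t) ≠ 0 for all t. Then W := (1/h(μ))·[[−1, −2y],[0, 1]]·ψ satisfies the Harnad–Tracy–Widom pair on D×ℂ: ∂W/∂μ = (μ·[[0,1],[0,0]] + [[−y, −(z+2y²+t)],[1/2, y]] + (1/(2μ))·[[θ,0],[z,−θ]])·W and ∂W/∂t = −(μ·[[0,1],[0,0]] + [[−y,0],[1/2,y]])·W. -/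
open Matrix Complex

noncomputable section

set_option maxHeartbeats 1000000 in
/-- If `ψ` solves the `2×2` reduction of `dJKT₂²` on `D×ℂ` and
`μ h'(μ) = (θ/2) h(μ)` with `h` nowhere zero on `D`, then
`W := (1/h)·[[−1,−2y],[0,1]]·ψ` solves the Harnad–Tracy–Widom pair with
parameter `θ` on `D×ℂ`. -/
theorem stmt_17 (θ : ℂ) (y z : ℂ → ℂ)
    (hy : Differentiable ℂ y) (hz : Differentiable ℂ z)
    (hy' : ∀ t : ℂ, deriv y t = (y t)^2 + z t + t/2)
    (hz' : ∀ t : ℂ, deriv z t = -2*(y t)*(z t) - θ)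
    (hz0 : ∀ t : ℂ, z t ≠ 0)
    (D : Set ℂ) (hD : IsOpen D) (hD0 : ∀ μ ∈ D, μ ≠ (0:ℂ))
    (h : ℂ → ℂ) (hh : DifferentiableOn ℂ h D)
    (hh0 : ∀ μ ∈ D, h μ ≠ 0)
    (hh' : ∀ μ ∈ D, μ * deriv h μ = (θ/2) * h μ)
    (ψ : ℂ → ℂ → Fin 2 → ℂ)
    (hψdiff : ∀ i, DifferentiableOn ℂ (fun p : ℂ × ℂ => ψ p.1 p.2 i) (D ×ˢ Set.univ))
    (hψμ : ∀ μ ∈ D, ∀ t : ℂ,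
      (fun i => deriv (fun m => ψ m t i) μ) =
        (μ • (!![0,-1; 0,0] : Matrix (Fin 2) (Fin 2) ℂ) +
          !![0, z t + t; -1/2, 0] +
          (1/μ) • !![(y t)*(z t) + θ, 2*(y t)*(z t)*(y t + θ/z t);
            -(z t)/2, -(y t)*(z t)]).mulVec (ψ μ t))
    (hψt : ∀ μ ∈ D, ∀ t : ℂ,
      (fun i => deriv (fun s => ψ μ s i) t) =
        (μ • (!![0,1; 0,0] : Matrix (Fin 2) (Fin 2) ℂ) +
          !![0, -2*z t - t; 1/2, 0]).mulVec (ψ μ t))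
    (W : ℂ → ℂ → Fin 2 → ℂ)
    (hW : ∀ μ t : ℂ,
      W μ t = (h μ)⁻¹ •
        (!![-1, -2*y t; 0, 1] : Matrix (Fin 2) (Fin 2) ℂ).mulVec (ψ μ t)) :
    ∀ μ ∈ D, ∀ t : ℂ,
      ((fun i => deriv (fun m => W m t i) μ) =
        (μ • (!![0,1; 0,0] : Matrix (Fin 2) (Fin 2) ℂ) +
          !![-y t, -(z t + 2*(y t)^2 + t); 1/2, y t] +
          (1/(2*μ)) • !![θ, 0; z t, -θ]).mulVec (W μ t)) ∧
      ((fun i => deriv (fun s => W μ s i) t) =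
        (-(μ • (!![0,1; 0,0] : Matrix (Fin 2) (Fin 2) ℂ) +
          !![-y t, 0; 1/2, y t])).mulVec (W μ t)) := by

  intro μ hμ t
  have hμ0 : μ ≠ 0 := hD0 μ hμ
  have hH : h μ ≠ 0 := hh0 μ hμ
  have hZ : z t ≠ 0 := hz0 t
  have hmem : (μ, t) ∈ D ×ˢ (Set.univ : Set ℂ) := ⟨hμ, trivial⟩
  have hopen : IsOpen (D ×ˢ (Set.univ : Set ℂ)) := hD.prod isOpen_univ
  have dψ : ∀ i, DifferentiableAt ℂ (fun p : ℂ × ℂ => ψ p.1 p.2 i) (μ, t) :=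
    fun i => (hψdiff i).differentiableAt (hopen.mem_nhds hmem)
  have dψμ : ∀ i, DifferentiableAt ℂ (fun m => ψ m t i) μ :=
    fun i => by have := (dψ i).comp μ (show DifferentiableAt ℂ (fun m : ℂ => (m, t)) μ from differentiableAt_id.prodMk (differentiableAt_const t)); exact this
  have dψt : ∀ i, DifferentiableAt ℂ (fun s => ψ μ s i) t :=
    fun i => by have := (dψ i).comp t (show DifferentiableAt ℂ (fun s : ℂ => (μ, s)) t from (differentiableAt_const μ).prodMk differentiableAt_id); exact this
  have hdh : DifferentiableAt ℂ h μ := hh.differentiableAt (hD.mem_nhds hμ)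
  have hdH : deriv h μ = θ / 2 * h μ / μ := by
    rw [eq_div_iff hμ0]
    linear_combination hh' μ hμ
  have hA := congrFun (hψμ μ hμ t) 0
  have hB := congrFun (hψμ μ hμ t) 1
  have hC := congrFun (hψt μ hμ t) 0
  have hE := congrFun (hψt μ hμ t) 1
  simp [Matrix.mulVec, dotProduct, Fin.sum_univ_two] at hA hB hC hE
  have Ha := (dψμ 0).hasDerivAt
  have Hb := (dψμ 1).hasDerivAt
  have Hc := (dψt 0).hasDerivAt
  have He := (dψt 1).hasDerivAt
  have Hy := (hy t).hasDerivAt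
  have Hh := hdh.hasDerivAt
  have e0 : (fun m => W m t 0) = fun m => (h m)⁻¹ * ((-1) * ψ m t 0 + (-(2 * y t)) * ψ m t 1) := by
    funext m
    simp [hW, Matrix.mulVec, dotProduct, Fin.sum_univ_two]
    try ring
  have e1 : (fun m => W m t 1) = fun m => (h m)⁻¹ * ψ m t 1 := by
    funext m
    simp [hW, Matrix.mulVec, dotProduct, Fin.sum_univ_two]
  have f0 : (fun s => W μ s 0) = fun s => (h μ)⁻¹ * ((-1) * ψ μ s 0 + (-2 * y s) * ψ μ s 1) := by
    funext s
    simp [hW, Matrix.mulVec, dotProduct, Fin.sum_univ_two]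
    try ring
  have f1 : (fun s => W μ s 1) = fun s => (h μ)⁻¹ * ψ μ s 1 := by
    funext s
    simp [hW, Matrix.mulVec, dotProduct, Fin.sum_univ_two]
  have K0 : HasDerivAt (fun m => (h m)⁻¹ * ((-1) * ψ m t 0 + (-(2 * y t)) * ψ m t 1))
      (-(deriv h μ) / (h μ) ^ 2 * ((-1) * ψ μ t 0 + (-(2 * y t)) * ψ μ t 1) +
        (h μ)⁻¹ * ((-1) * deriv (fun m => ψ m t 0) μ +
          (-(2 * y t)) * deriv (fun m => ψ m t 1) μ)) μ :=
    (Hh.inv hH).mul ((Ha.const_mul (-1)).add (Hb.const_mul (-(2 * y t))))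
  have K1 : HasDerivAt (fun m => (h m)⁻¹ * ψ m t 1)
      (-(deriv h μ) / (h μ) ^ 2 * ψ μ t 1 + (h μ)⁻¹ * deriv (fun m => ψ m t 1) μ) μ :=
    (Hh.inv hH).mul Hb
  have L0 : HasDerivAt (fun s => (h μ)⁻¹ * ((-1) * ψ μ s 0 + (-2 * y s) * ψ μ s 1))
      ((h μ)⁻¹ * ((-1) * deriv (fun s => ψ μ s 0) t +
        ((-2 * deriv y t) * ψ μ t 1 + (-2 * y t) * deriv (fun s => ψ μ s 1) t))) t :=
    ((Hc.const_mul (-1)).add ((Hy.const_mul (-2)).mul He)).const_mul _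
  have L1 : HasDerivAt (fun s => (h μ)⁻¹ * ψ μ s 1)
      ((h μ)⁻¹ * deriv (fun s => ψ μ s 1) t) t := He.const_mul _
  constructor
  · funext i
    fin_cases i
    · show deriv (fun m => W m t 0) μ = _
      rw [e0, K0.deriv, hA, hB, hdH]
      simp [hW, Matrix.mulVec, dotProduct, Fin.sum_univ_two]
      have eH : h μ * (h μ)⁻¹ = 1 := mul_inv_cancel₀ hH
      have eZ : z t * (z t)⁻¹ = 1 := mul_inv_cancel₀ hZ
      linear_combination ((1/2:ℂ) * θ * ψ μ t 0 * μ⁻¹ * (h μ)⁻¹ +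
          θ * y t * ψ μ t 1 * μ⁻¹ * (h μ)⁻¹) * eH +
        ((-2:ℂ) * θ * y t * ψ μ t 1 * μ⁻¹ * (h μ)⁻¹) * eZ
    · show deriv (fun m => W m t 1) μ = _
      rw [e1, K1.deriv, hB, hdH]
      simp [hW, Matrix.mulVec, dotProduct, Fin.sum_univ_two]
      have eH : h μ * (h μ)⁻¹ = 1 := mul_inv_cancel₀ hH
      linear_combination ((-1/2:ℂ) * θ * ψ μ t 1 * μ⁻¹ * (h μ)⁻¹) * eH
  · funext i
    fin_cases i
    · show deriv (fun s => W μ s 0) t = _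
      rw [f0, L0.deriv, hC, hE, hy' t]
      simp [hW, Matrix.mulVec, dotProduct, Fin.sum_univ_two]
      ring
    · show deriv (fun s => W μ s 1) t = _
      rw [f1, L1.deriv, hE]
      simp [hW, Matrix.mulVec, dotProduct, Fin.sum_univ_two]
      ring
end
end

section
/- Let θ ∈ ℂ, α = 1/2 − θ, and let u, y, z : ℂ → ℂ be holomorphic with u(t) ≠ 0, u′ = −yu, y′ = y² + z + t/2, and z′ = −2yz − θ for all t. Let Ω ⊆ ℂ² be open with λ ≠ y(t) for all (λ,t) ∈ Ω, let Y = (Y₁,Y₂) : Ω → ℂ² be a holomorphic solution of the Jimbo–Miwa pair JM₂, and let s : Ω → ℂ be holomorphic with s(λ,t)² = u(t)·(λ − y(t)) on Ω. Define V := Y₁/s. Then on Ω: ∂²V/∂λ² = (3/(4(λ−y)²) − y′/(λ−y) + (y′)² + λ⁴ − y⁴ + t(λ² − y²) + 2α(λ−y))·V and ∂V/∂t = (1/(2(λ−y)))·∂V/∂λ + (1/(4(λ−y)²))·V, where y′ = y² + z + t/2; i.e. V satisfies the scalar Garnier pair G₂ for the second Painlevé equation with parameter α = 1/2 − θ. 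-/
open Matrix Complex Filter

noncomputable section

private lemma aux1 (l Yv Z T θ VV G S : ℂ) (hS : S ≠ 0) (hY : l - Yv ≠ 0) :
    (2*l + 1/(2*(l - Yv)^2)) * VV
      + (l^2 + Z + T/2 - 1/(2*(l - Yv))) * ((l^2 + Z + T/2 - 1/(2*(l - Yv))) * VV + S * G)
      + (S/(2*(l - Yv)) * G
          + S * ((-2*(Z*l + Yv*Z + θ) * (l - Yv)) * (VV/S) + (-l^2 - Z - T/2) * G))
    = (3/(4*(l - Yv)^2) - (Yv^2 + Z + T/2)/(l - Yv) + (Yv^2 + Z + T/2)^2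
        + l^4 - Yv^4 + T*(l^2 - Yv^2) + 2*(1/2 - θ)*(l - Yv)) * VV := by
  obtain ⟨d, hd⟩ : ∃ d, d = l - Yv := ⟨_, rfl⟩
  have hd0 : d ≠ 0 := hd ▸ hY
  have hl : l = d + Yv := by rw [hd]; ring
  rw [← hd, hl]
  have hde : d * d⁻¹ = 1 := mul_inv_cancel₀ hd0
  have hSr : S * S⁻¹ = 1 := mul_inv_cancel₀ hS
  linear_combination ((-2)*Yv*VV + (-1)*d*VV) * hde
    + ((-2)*d*θ*VV + (-4)*d*Yv*Z*VV + (-2)*d^2*Z*VV) * hSr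

private lemma aux2 (l Yv Z T F G S : ℂ) (hS : S ≠ 0) (hY : l - Yv ≠ 0) :
    ((l/2 * F + S^2/(2*(l - Yv)) * G) * S
      - F * ((-Yv * S * (l - Yv) - S * (Yv^2 + Z + T/2)) / (2*(l - Yv)))) / S^2
    = 1/(2*(l - Yv)) * ((l^2 + Z + T/2 - 1/(2*(l - Yv))) * (F/S) + S * G)
      + 1/(4*(l - Yv)^2) * (F/S) := by
  obtain ⟨d, hd⟩ : ∃ d, d = l - Yv := ⟨_, rfl⟩
  have hd0 : d ≠ 0 := hd ▸ hY
  have hl : l = d + Yv := by rw [hd]; ring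
  rw [← hd, hl]
  have hde : d * d⁻¹ = 1 := mul_inv_cancel₀ hd0
  have hSr : S * S⁻¹ = 1 := mul_inv_cancel₀ hS
  linear_combination ((-1)*Yv*F*S⁻¹ + (1/2)*Yv*S*F*S⁻¹^2 + ((-1)/2)*d*F*S⁻¹) * hde
    + ((1/2)*G*S*d⁻¹ + (1/2)*G*S^2*d⁻¹*S⁻¹ + (1/4)*T*F*d⁻¹*S⁻¹ + (1/2)*Z*F*d⁻¹*S⁻¹
        + Yv*F*S⁻¹ + (1/2)*Yv^2*F*d⁻¹*S⁻¹ + (1/2)*d*F*S⁻¹) * hSr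

set_option maxHeartbeats 1000000 in
/-- If `Y` solves the Jimbo–Miwa pair `JM₂` on an open set `Ω` avoiding `λ = y(t)`,
with `u' = −yu`, `y' = y² + z + t/2`, `z' = −2yz − θ`, and `s² = u(λ − y(t))`, then
`V := Y₁/s` solves the scalar Garnier pair `G₂` for the second Painlevé equation
with parameter `α = 1/2 − θ`. -/
theorem stmt_18 (θ α : ℂ) (hα : α = 1/2 - θ)
    (u y z : ℂ → ℂ)
    (hu : Differentiable ℂ u) (hy : Differentiable ℂ y) (hz : Differentiable ℂ z)
    (hu0 : ∀ t : ℂ, u t ≠ 0)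
    (hu' : ∀ t : ℂ, deriv u t = -(y t) * u t)
    (hy' : ∀ t : ℂ, deriv y t = (y t)^2 + z t + t/2)
    (hz' : ∀ t : ℂ, deriv z t = -2*(y t)*(z t) - θ)
    (Ω : Set (ℂ × ℂ)) (hΩ : IsOpen Ω)
    (hne : ∀ p ∈ Ω, p.1 ≠ y p.2)
    (Y : ℂ → ℂ → Fin 2 → ℂ)
    (hYdiff : ∀ i, DifferentiableOn ℂ (fun p : ℂ × ℂ => Y p.1 p.2 i) Ω)
    (hYlam : ∀ l t : ℂ, (l, t) ∈ Ω →
      (fun i => deriv (fun w => Y w t i) l) =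
        (l^2 • (!![1,0; 0,-1] : Matrix (Fin 2) (Fin 2) ℂ) +
          l • !![0, u t; -2*z t/u t, 0] +
          !![z t + t/2, -(u t)*(y t);
            -2*((y t)*(z t) + θ)/u t, -(z t) - t/2]).mulVec (Y l t))
    (hYt : ∀ l t : ℂ, (l, t) ∈ Ω →
      (fun i => deriv (fun s => Y l s i) t) =
        ((l/2) • (!![1,0; 0,-1] : Matrix (Fin 2) (Fin 2) ℂ) +
          (1/2 : ℂ) • !![0, u t; -2*z t/u t, 0]).mulVec (Y l t))
    (s : ℂ → ℂ → ℂ)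
    (hs : DifferentiableOn ℂ (fun p : ℂ × ℂ => s p.1 p.2) Ω)
    (hs2 : ∀ l t : ℂ, (l, t) ∈ Ω → (s l t)^2 = u t * (l - y t))
    (V : ℂ → ℂ → ℂ)
    (hV : ∀ l t : ℂ, V l t = Y l t 0 / s l t) :
    ∀ l t : ℂ, (l, t) ∈ Ω →
      (deriv (fun w => deriv (fun w' => V w' t) w) l =
        (3/(4*(l - y t)^2) - deriv y t/(l - y t) + (deriv y t)^2
          + l^4 - (y t)^4 + t*(l^2 - (y t)^2) + 2*α*(l - y t)) * V l t) ∧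
      (deriv (fun s' => V l s') t =
        (1/(2*(l - y t))) * deriv (fun w => V w t) l + (1/(4*(l - y t)^2)) * V l t) := by
  have hUt : ∀ l t : ℂ, (l, t) ∈ Ω → ∀ᶠ w in nhds l, (w, t) ∈ Ω := by
    intro l t h
    exact (continuous_id.prodMk continuous_const).continuousAt.preimage_mem_nhds
      (hΩ.mem_nhds h)
  have hUtT : ∀ l t : ℂ, (l, t) ∈ Ω → ∀ᶠ τ in nhds t, (l, τ) ∈ Ω := by
    intro l t h
    exact (continuous_const.prodMk continuous_id).continuousAt.preimage_mem_nhds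
      (hΩ.mem_nhds h)
  have sdL : ∀ (F : ℂ × ℂ → ℂ), DifferentiableOn ℂ F Ω → ∀ l t : ℂ, (l, t) ∈ Ω →
      DifferentiableAt ℂ (fun w => F (w, t)) l := fun F hF l t h =>
    (hF.differentiableAt (hΩ.mem_nhds h)).comp l
      (differentiableAt_id.prodMk (differentiableAt_const t))
  have sdT : ∀ (F : ℂ × ℂ → ℂ), DifferentiableOn ℂ F Ω → ∀ l t : ℂ, (l, t) ∈ Ω →
      DifferentiableAt ℂ (fun τ => F (l, τ)) t := fun F hF l t h =>
    (hF.differentiableAt (hΩ.mem_nhds h)).comp t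
      ((differentiableAt_const l).prodMk differentiableAt_id)
  have hne' : ∀ l t : ℂ, (l, t) ∈ Ω → l - y t ≠ 0 := fun l t h =>
    sub_ne_zero.2 (hne (l, t) h)
  have hσ0 : ∀ l t : ℂ, (l, t) ∈ Ω → s l t ≠ 0 := by
    intro l t h h0
    have h2 := hs2 l t h
    rw [h0] at h2
    exact (mul_ne_zero (hu0 t) (hne' l t h)) (by simpa using h2.symm)
  -- λ-derivative of Y₁
  have hf : ∀ l t : ℂ, (l, t) ∈ Ω → HasDerivAt (fun w => Y w t 0)
      ((l^2 + z t + t/2) * Y l t 0 + (s l t)^2 * Y l t 1) l := by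
    intro l t h
    have hd : DifferentiableAt ℂ (fun w => Y w t 0) l := sdL _ (hYdiff 0) l t h
    have hH := hd.hasDerivAt
    have e2 : deriv (fun w => Y w t 0) l =
        (l^2 + z t + t/2) * Y l t 0 + (s l t)^2 * Y l t 1 := by
      rw [congrFun (hYlam l t h) 0, hs2 l t h]
      conv_lhs => simp [Matrix.mulVec, dotProduct, Fin.sum_univ_two]
      all_goals ring
    rwa [e2] at hH
  -- λ-derivative of Y₂
  have hg : ∀ l t : ℂ, (l, t) ∈ Ω → HasDerivAt (fun w => Y w t 1)
      ((-2*(z t*l + y t*z t + θ) * (l - y t)) * (V l t / s l t)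
        + (-l^2 - z t - t/2) * Y l t 1) l := by
    intro l t h
    have hd : DifferentiableAt ℂ (fun w => Y w t 1) l := sdL _ (hYdiff 1) l t h
    have hH := hd.hasDerivAt
    have hss : s l t * s l t = u t * (l - y t) := by
      rw [← pow_two]; exact hs2 l t h
    have e2 : deriv (fun w => Y w t 1) l =
        (-2*(z t*l + y t*z t + θ) * (l - y t)) * (V l t / s l t)
          + (-l^2 - z t - t/2) * Y l t 1 := by
      rw [congrFun (hYlam l t h) 1, hV l t, div_div, hss]
      conv_lhs => simp [Matrix.mulVec, dotProduct, Fin.sum_univ_two]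
      have h1 := hu0 t
      have h2 := hne' l t h
      field_simp
      ring
    rwa [e2] at hH
  -- t-derivative of Y₁
  have hft : ∀ l t : ℂ, (l, t) ∈ Ω → HasDerivAt (fun τ => Y l τ 0)
      (l/2 * Y l t 0 + (s l t)^2/(2*(l - y t)) * Y l t 1) t := by
    intro l t h
    have hd : DifferentiableAt ℂ (fun τ => Y l τ 0) t := sdT _ (hYdiff 0) l t h
    have hH := hd.hasDerivAt
    have e2 : deriv (fun τ => Y l τ 0) t
        = l/2 * Y l t 0 + (s l t)^2/(2*(l - y t)) * Y l t 1 := by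
      rw [congrFun (hYt l t h) 0, hs2 l t h]
      conv_lhs => simp [Matrix.mulVec, dotProduct, Fin.sum_univ_two]
      have h2 := hne' l t h
      field_simp
    rwa [e2] at hH
  -- λ-derivative of s
  have hsl : ∀ l t : ℂ, (l, t) ∈ Ω →
      HasDerivAt (fun w => s w t) (s l t / (2 * (l - y t))) l := by
    intro l t h
    have hd : DifferentiableAt ℂ (fun w => s w t) l := sdL _ hs l t h
    have hH := hd.hasDerivAt
    have hev : (fun w => (s w t)^2) =ᶠ[nhds l] (fun w => u t * (w - y t)) := by
      filter_upwards [hUt l t h] with w hw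
      exact hs2 w t hw
    have h1 : deriv (fun w => (s w t)^2) l = u t := by
      rw [hev.deriv_eq]
      have hR : HasDerivAt (fun w : ℂ => u t * (w - y t)) (u t * 1) l :=
        ((hasDerivAt_id l).sub_const (y t)).const_mul (u t)
      simpa using hR.deriv
    have h2 : deriv (fun w => (s w t)^2) l = 2 * s l t * deriv (fun w => s w t) l := by
      simpa [mul_comm, mul_assoc] using (hH.fun_pow 2).deriv
    have h21 : 2 * s l t * deriv (fun w => s w t) l = u t := h2.symm.trans h1
    have h3 : deriv (fun w => s w t) l = s l t / (2 * (l - y t)) := by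
      rw [eq_div_iff (mul_ne_zero two_ne_zero (hne' l t h))]
      apply mul_left_cancel₀ (hσ0 l t h)
      linear_combination (l - y t) * h21 - hs2 l t h
    rwa [h3] at hH
  -- t-derivative of s
  have hst : ∀ l t : ℂ, (l, t) ∈ Ω →
      HasDerivAt (fun τ => s l τ)
        ((-(y t) * s l t * (l - y t) - s l t * ((y t)^2 + z t + t/2)) / (2 * (l - y t))) t := by
    intro l t h
    have hd : DifferentiableAt ℂ (fun τ => s l τ) t := sdT _ hs l t h
    have hH := hd.hasDerivAt
    have hev : (fun τ => (s l τ)^2) =ᶠ[nhds t] (fun τ => u τ * (l - y τ)) := by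
      filter_upwards [hUtT l t h] with τ hτ
      exact hs2 l τ hτ
    have h1 : deriv (fun τ => (s l τ)^2) t =
        (-(y t) * u t) * (l - y t) - u t * ((y t)^2 + z t + t/2) := by
      rw [hev.deriv_eq]
      have hR : HasDerivAt (fun τ => u τ * (l - y τ))
          (deriv u t * (l - y t) + u t * (0 - deriv y t)) t :=
        (hu t).hasDerivAt.mul ((hasDerivAt_const t l).sub (hy t).hasDerivAt)
      rw [hR.deriv, hu' t, hy' t]; ring
    have h2 : deriv (fun τ => (s l τ)^2) t = 2 * s l t * deriv (fun τ => s l τ) t := by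
      simpa [mul_comm, mul_assoc] using (hH.fun_pow 2).deriv
    have h21 : 2 * s l t * deriv (fun τ => s l τ) t =
        (-(y t) * u t) * (l - y t) - u t * ((y t)^2 + z t + t/2) := h2.symm.trans h1
    have h3 : deriv (fun τ => s l τ) t =
        (-(y t) * s l t * (l - y t) - s l t * ((y t)^2 + z t + t/2)) / (2 * (l - y t)) := by
      rw [eq_div_iff (mul_ne_zero two_ne_zero (hne' l t h))]
      apply mul_left_cancel₀ (hσ0 l t h)
      linear_combination (l - y t) * h21
        + (y t * (l - y t) + ((y t)^2 + z t + t/2)) * hs2 l t h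
    rwa [h3] at hH
  -- first λ-derivative of V
  have hVd : ∀ l t : ℂ, (l, t) ∈ Ω →
      HasDerivAt (fun w => V w t)
        ((l^2 + z t + t/2 - 1/(2*(l - y t))) * V l t + s l t * Y l t 1) l := by
    intro l t h
    have hs0 := hσ0 l t h
    have hy0 := hne' l t h
    have hVfun : (fun w => V w t) = fun w => Y w t 0 / s w t := funext fun w => hV w t
    rw [hVfun, hV l t]
    have hD := (hf l t h).div (hsl l t h) hs0
    have hval : (((l^2 + z t + t/2) * Y l t 0 + (s l t)^2 * Y l t 1) * s l t
          - Y l t 0 * (s l t / (2 * (l - y t)))) / (s l t)^2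
        = (l^2 + z t + t/2 - 1/(2*(l - y t))) * (Y l t 0 / s l t) + s l t * Y l t 1 := by
      field_simp
      ring
    rwa [hval] at hD
  intro l t h
  have hs0 := hσ0 l t h
  have hy0 := hne' l t h
  constructor
  · -- λ-part
    have hE : (fun w => deriv (fun w' => V w' t) w) =ᶠ[nhds l]
        (fun w => (w^2 + z t + t/2 - 1/(2*(w - y t))) * V w t + s w t * Y w t 1) := by
      filter_upwards [hUt l t h] with w hw
      exact (hVd w t hw).deriv
    rw [hE.deriv_eq]
    have h1 : HasDerivAt (fun w : ℂ => w^2 + z t + t/2) ((2:ℕ) * l^1) l :=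
      ((hasDerivAt_pow 2 l).add_const (z t)).add_const (t/2)
    have h2 : HasDerivAt (fun w : ℂ => 1/(2*(w - y t)))
        ((0 * (2*(l - y t)) - 1 * (2 * 1)) / (2*(l - y t))^2) l :=
      (hasDerivAt_const l 1).div (((hasDerivAt_id l).sub_const (y t)).const_mul 2)
        (mul_ne_zero two_ne_zero hy0)
    have hP0 := h1.sub h2
    have hval : ((2:ℕ) * l^1 : ℂ) - (0 * (2*(l - y t)) - 1 * (2 * 1)) / (2*(l - y t))^2
        = 2*l + 1/(2*(l - y t)^2) := by
      obtain ⟨d, hd⟩ : ∃ d, d = l - y t := ⟨_, rfl⟩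
      rw [← hd]
      push_cast
      ring
    rw [hval] at hP0
    have hEd := (hP0.mul (hVd l t h)).add ((hsl l t h).mul (hg l t h))
    refine hEd.deriv.trans ?_
    rw [hy' t, hα]
    exact aux1 l (y t) (z t) t θ (V l t) (Y l t 1) (s l t) hs0 hy0
  · -- t-part
    have hVfun : (fun s' => V l s') = fun τ => Y l τ 0 / s l τ := funext fun τ => hV l τ
    rw [hVfun]
    rw [((hft l t h).fun_div (hst l t h) hs0).deriv]
    rw [(hVd l t h).deriv, hV l t]
    exact aux2 l (y t) (z t) t (Y l t 0) (Y l t 1) (s l t) hs0 hy0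
end
end

section
/- Let α ∈ ℂ, θ = 1/2 − α, and let y : ℂ → ℂ be a holomorphic solution of y″ = 2y³ + t·y + α; set z(t) := y′(t) − y(t)² − t/2. Let v : ℂ → ℂ be holomorphic with v(t) ≠ 0 and v′(t) = −(1/2)·y(t)·v(t) for all t, and set u := v². Let Y be a holomorphic solution on ℂ² of the Jimbo–Miwa pair JM₂ with parameter θ and coefficient functions u, y, z. Then M(λ,t) := [[λ+y, 1],[1, 0]]·[[1/v, 0],[0, v]]·Y(λ,t) satisfies the Conte–Musette pair: ∂M/∂λ = (λ³·[[0,1],[0,0]] + λ²·[[0,y],[0,0]] + λ·[[0, y²+t],[1, 0]] + [[−y′, y³+ty+2α],[−y, y′]])·M and ∂M/∂t = ((λ²/2)·[[0,1],[0,0]] + λ·[[0,y],[0,0]] + [[0, (3y²+t)/2],[1/2, 0]])·M. -/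
open Matrix Complex

noncomputable section

set_option maxHeartbeats 1600000 in
/-- The gauge transformation `M := [[λ+y,1],[1,0]]·diag(1/v, v)·Y`, with `v' = −yv/2`,
`u = v²`, maps a holomorphic solution `Y` of the Jimbo–Miwa pair `JM₂` with parameter
`θ = 1/2 − α` (where `y` solves `P₂` with parameter `α` and `z = y' − y² − t/2`) to a
solution `M` of the Conte–Musette pair `CM₂`. -/
theorem stmt_19 (α θ : ℂ) (hθ : θ = 1/2 - α)
    (y : ℂ → ℂ) (hy : Differentiable ℂ y)
    (hP2 : ∀ t : ℂ, deriv (deriv y) t = 2*(y t)^3 + t*(y t) + α)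
    (z : ℂ → ℂ) (hz : ∀ t : ℂ, z t = deriv y t - (y t)^2 - t/2)
    (v : ℂ → ℂ) (hv : Differentiable ℂ v) (hv0 : ∀ t : ℂ, v t ≠ 0)
    (hv' : ∀ t : ℂ, deriv v t = -(1/2) * y t * v t)
    (u : ℂ → ℂ) (hu : ∀ t : ℂ, u t = (v t)^2)
    (Y : ℂ → ℂ → Fin 2 → ℂ)
    (hYdiff : ∀ i, Differentiable ℂ (fun p : ℂ × ℂ => Y p.1 p.2 i))
    (hYlam : ∀ l t : ℂ,
      (fun i => deriv (fun w => Y w t i) l) =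
        (l^2 • (!![1,0; 0,-1] : Matrix (Fin 2) (Fin 2) ℂ) +
          l • !![0, u t; -2*z t/u t, 0] +
          !![z t + t/2, -(u t)*(y t);
            -2*((y t)*(z t) + θ)/u t, -(z t) - t/2]).mulVec (Y l t))
    (hYt : ∀ l t : ℂ,
      (fun i => deriv (fun s => Y l s i) t) =
        ((l/2) • (!![1,0; 0,-1] : Matrix (Fin 2) (Fin 2) ℂ) +
          (1/2 : ℂ) • !![0, u t; -2*z t/u t, 0]).mulVec (Y l t))
    (M : ℂ → ℂ → Fin 2 → ℂ)
    (hM : ∀ l t : ℂ,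
      M l t = ((!![l + y t, 1; 1, 0] : Matrix (Fin 2) (Fin 2) ℂ) *
        !![(v t)⁻¹, 0; 0, v t]).mulVec (Y l t)) :
    (∀ l t : ℂ,
      (fun i => deriv (fun w => M w t i) l) =
        (l^3 • (!![0,1; 0,0] : Matrix (Fin 2) (Fin 2) ℂ) +
          l^2 • (!![0, y t; 0, 0] : Matrix (Fin 2) (Fin 2) ℂ) +
          l • (!![0, (y t)^2 + t; 1, 0] : Matrix (Fin 2) (Fin 2) ℂ) +
          !![-deriv y t, (y t)^3 + t*(y t) + 2*α;
            -y t, deriv y t]).mulVec (M l t)) ∧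
    (∀ l t : ℂ,
      (fun i => deriv (fun s => M l s i) t) =
        ((l^2/2) • (!![0,1; 0,0] : Matrix (Fin 2) (Fin 2) ℂ) +
          l • (!![0, y t; 0, 0] : Matrix (Fin 2) (Fin 2) ℂ) +
          !![0, (3*(y t)^2 + t)/2; 1/2, 0]).mulVec (M l t)) := by
  -- explicit component formulas for M
  have hM0 : ∀ l t : ℂ, M l t 0 = (l + y t) * ((v t)⁻¹ * Y l t 0) + v t * Y l t 1 := by
    intro l t
    rw [hM]
    simp [Matrix.mulVec, dotProduct, Fin.sum_univ_two, Matrix.mul_apply]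
    ring
  have hM1 : ∀ l t : ℂ, M l t 1 = (v t)⁻¹ * Y l t 0 := by
    intro l t
    rw [hM]
    simp [Matrix.mulVec, dotProduct, Fin.sum_univ_two, Matrix.mul_apply]
  have hYl : ∀ (i : Fin 2) (t : ℂ), Differentiable ℂ (fun w => Y w t i) :=
    fun i t => (hYdiff i).comp (differentiable_id.prodMk (differentiable_const t))
  have hYs : ∀ (i : Fin 2) (l : ℂ), Differentiable ℂ (fun s => Y l s i) :=
    fun i l => (hYdiff i).comp ((differentiable_const l).prodMk differentiable_id)
  constructor
  · intro l t
    have h0 := congrFun (hYlam l t) 0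
    have h1 := congrFun (hYlam l t) 1
    simp [Matrix.mulVec, dotProduct, Fin.sum_univ_two] at h0 h1
    funext i
    fin_cases i
    · have hf : (fun w => M w t 0) =
          fun w => (w + y t) * ((v t)⁻¹ * Y w t 0) + v t * Y w t 1 :=
        funext fun w => hM0 w t
      have hd : HasDerivAt (fun w => (w + y t) * ((v t)⁻¹ * Y w t 0) + v t * Y w t 1)
          (1 * ((v t)⁻¹ * Y l t 0) +
            (l + y t) * ((v t)⁻¹ * deriv (fun w => Y w t 0) l) +
            v t * deriv (fun w => Y w t 1) l) l := by
        exact (((hasDerivAt_id l).add_const (y t)).mul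
            (((hYl 0 t) l).hasDerivAt.const_mul _)).add
          (((hYl 1 t) l).hasDerivAt.const_mul _)
      show deriv (fun w => M w t 0) l = _
      rw [hf, hd.deriv, h0, h1]
      simp only [Matrix.mulVec, dotProduct, Fin.sum_univ_two, Matrix.add_apply,
        Matrix.smul_apply, Matrix.cons_val', Matrix.cons_val_zero, Matrix.cons_val_one,
        Matrix.head_cons, Matrix.head_fin_const, Matrix.empty_val', Matrix.cons_val_fin_one,
        smul_eq_mul, Matrix.of_apply, Fin.zero_eta, Fin.mk_one]
      rw [hM0, hM1, hz, hu, hθ]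
      field_simp [hv0 t]
      ring
    · have hf : (fun w => M w t 1) = fun w => (v t)⁻¹ * Y w t 0 :=
        funext fun w => hM1 w t
      have hd : HasDerivAt (fun w => (v t)⁻¹ * Y w t 0)
          ((v t)⁻¹ * deriv (fun w => Y w t 0) l) l :=
        ((hYl 0 t) l).hasDerivAt.const_mul _
      show deriv (fun w => M w t 1) l = _
      rw [hf, hd.deriv, h0]
      simp only [Matrix.mulVec, dotProduct, Fin.sum_univ_two, Matrix.add_apply,
        Matrix.smul_apply, Matrix.cons_val', Matrix.cons_val_zero, Matrix.cons_val_one,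
        Matrix.head_cons, Matrix.head_fin_const, Matrix.empty_val', Matrix.cons_val_fin_one,
        smul_eq_mul, Matrix.of_apply, Fin.zero_eta, Fin.mk_one]
      rw [hM0, hM1, hz, hu]
      field_simp [hv0 t]
      ring
  · intro l t
    have h0 := congrFun (hYt l t) 0
    have h1 := congrFun (hYt l t) 1
    simp [Matrix.mulVec, dotProduct, Fin.sum_univ_two] at h0 h1
    have hyd : HasDerivAt y (deriv y t) t := (hy t).hasDerivAt
    have hvd : HasDerivAt v (deriv v t) t := (hv t).hasDerivAt
    have hivd : HasDerivAt (fun s => (v s)⁻¹) (-deriv v t / (v t)^2) t := hvd.inv (hv0 t)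
    have hY0d : HasDerivAt (fun s => Y l s 0) (deriv (fun s => Y l s 0) t) t :=
      ((hYs 0 l) t).hasDerivAt
    have hY1d : HasDerivAt (fun s => Y l s 1) (deriv (fun s => Y l s 1) t) t :=
      ((hYs 1 l) t).hasDerivAt
    funext i
    fin_cases i
    · have hf : (fun s => M l s 0) =
          fun s => (l + y s) * ((v s)⁻¹ * Y l s 0) + v s * Y l s 1 :=
        funext fun s => hM0 l s
      have hd : HasDerivAt (fun s => (l + y s) * ((v s)⁻¹ * Y l s 0) + v s * Y l s 1)
          ((0 + deriv y t) * ((v t)⁻¹ * Y l t 0) +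
            (l + y t) * (-deriv v t / (v t)^2 * Y l t 0 +
              (v t)⁻¹ * deriv (fun s => Y l s 0) t) +
            (deriv v t * Y l t 1 + v t * deriv (fun s => Y l s 1) t)) t := by
        exact (((hasDerivAt_const t l).add hyd).mul (hivd.mul hY0d)).add (hvd.mul hY1d)
      show deriv (fun s => M l s 0) t = _
      rw [hf, hd.deriv, h0, h1, hv']
      simp only [Matrix.mulVec, dotProduct, Fin.sum_univ_two, Matrix.add_apply,
        Matrix.smul_apply, Matrix.cons_val', Matrix.cons_val_zero, Matrix.cons_val_one,
        Matrix.head_cons, Matrix.head_fin_const, Matrix.empty_val', Matrix.cons_val_fin_one,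
        smul_eq_mul, Matrix.of_apply, Fin.zero_eta, Fin.mk_one]
      rw [hM0, hM1, hz, hu]
      field_simp [hv0 t]
      ring_nf
    · have hf : (fun s => M l s 1) = fun s => (v s)⁻¹ * Y l s 0 :=
        funext fun s => hM1 l s
      have hd : HasDerivAt (fun s => (v s)⁻¹ * Y l s 0)
          (-deriv v t / (v t)^2 * Y l t 0 + (v t)⁻¹ * deriv (fun s => Y l s 0) t) t :=
        hivd.mul hY0d
      show deriv (fun s => M l s 1) t = _
      rw [hf, hd.deriv, h0, hv']
      simp only [Matrix.mulVec, dotProduct, Fin.sum_univ_two, Matrix.add_apply,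
        Matrix.smul_apply, Matrix.cons_val', Matrix.cons_val_zero, Matrix.cons_val_one,
        Matrix.head_cons, Matrix.head_fin_const, Matrix.empty_val', Matrix.cons_val_fin_one,
        smul_eq_mul, Matrix.of_apply, Fin.zero_eta, Fin.mk_one]
      rw [hM0, hM1, hu]
      field_simp [hv0 t]
      ring
end
end
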